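/- arXiv:1609.06995 — 5 statements merged into one kernel-verified Lean document; each statement's English description precedes it below -/
import Mathlib

section
/- (Krattenthaler determinant evaluation) For variables x_1,...,x_n and parameters A_2,...,A_n, B_2,...,B_n, one has det_{1≤i,j≤n}( (x_i + A_n)(x_i + A_{n-1})⋯(x_i + A_{j+1}) · (x_i + B_j)(x_i + B_{j-1})⋯(x_i + B_2) ) = Δ_n(x) · ∏_{2≤i≤j≤n} (B_i - A_j). -/
open Finset

namespace Stmt9

variable {R : Type*} [CommRing R]

/-- Intermediate matrices: after `r` rounds of column operations. -/
def G (n : ℕ) (x : Fin n → R) (A B : ℕ → R) (r : ℕ) : Matrix (Fin n) (Fin n) R :=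
  Matrix.of fun i j => (∏ k ∈ Finset.Icc (j.val + 2) n, (x i + A k)) *
    ∏ k ∈ Finset.Icc 2 (j.val + 1 - r), (x i + B k)

/-- The upper-triangular column-operation matrix. -/
def U (n : ℕ) (A B : ℕ → R) (r : ℕ) : Matrix (Fin n) (Fin n) R :=
  Matrix.of fun l j =>
    if j.val ≤ r then (if l = j then (1 : R) else 0)
    else if l.val = r then 1
    else if r < l.val ∧ l.val ≤ j.val then B (l.val + 1 - r) - A (l.val + 1)
    else 0

lemma tele (n r : ℕ) (a : R) (A B : ℕ → R) :
    ∀ m, r ≤ m → m < n →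
      (∏ k ∈ Icc (m + 2) n, (a + A k)) * ∏ k ∈ Icc 2 (m + 1 - r), (a + B k)
        = (∏ k ∈ Icc (r + 2) n, (a + A k)) +
          ∑ l ∈ Icc (r + 1) m, (B (l + 1 - r) - A (l + 1)) *
            ((∏ k ∈ Icc (l + 2) n, (a + A k)) * ∏ k ∈ Icc 2 (l - r), (a + B k)) := by
  intro m hrm
  induction m, hrm using Nat.le_induction with
  | base =>
    intro _
    rw [show r + 1 - r = 1 by omega, Finset.Icc_eq_empty (by omega : ¬ (2 : ℕ) ≤ 1),
      Finset.Icc_eq_empty (by omega : ¬ r + 1 ≤ r)]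
    simp
  | succ m hrm ih =>
    intro hmn
    have ih' := ih (by omega)
    have h1 : m + 1 + 1 - r = (m + 1 - r) + 1 := by omega
    have h2 : (2 : ℕ) ≤ (m + 1 - r) + 1 := by omega
    have h3 : Icc (m + 2) n = insert (m + 2) (Icc (m + 3) n) := by
      ext k; simp only [mem_Icc, mem_insert]; omega
    have h4 : (m + 2) ∉ Icc (m + 3) n := by simp
    rw [h1, Finset.prod_Icc_succ_top h2,
      Finset.sum_Icc_succ_top (by omega : r + 1 ≤ m + 1), ← add_assoc, ← ih',
      show m + 1 + 1 - r = m + 1 - r + 1 from h1, show m + 1 + 1 = m + 2 by omega,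
      show m + 1 + 2 = m + 3 by omega, h3, Finset.prod_insert h4]
    ring

lemma factor (n : ℕ) (x : Fin n → R) (A B : ℕ → R) (r : ℕ) :
    G n x A B r = G n x A B (r + 1) * U n A B r := by
  ext i j
  rw [Matrix.mul_apply]
  by_cases h : j.val ≤ r
  · have hterm : ∀ l : Fin n, G n x A B (r + 1) i l * U n A B r l j =
        if l = j then G n x A B (r + 1) i j else 0 := by
      intro l
      simp only [U, Matrix.of_apply, if_pos h]
      split_ifs with hlj
      · subst hlj; ring
      · ring
    rw [Finset.sum_congr rfl fun l _ => hterm l, Finset.sum_ite_eq' Finset.univ j]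
    simp only [Finset.mem_univ, if_true]
    simp only [G, Matrix.of_apply]
    rw [Finset.Icc_eq_empty (by omega : ¬ (2 : ℕ) ≤ j.val + 1 - r),
      Finset.Icc_eq_empty (by omega : ¬ (2 : ℕ) ≤ j.val + 1 - (r + 1))]
  · have hrj : r < j.val := by omega
    have hjn : j.val < n := j.isLt
    set F : ℕ → R := fun l =>
      ((∏ k ∈ Icc (l + 2) n, (x i + A k)) * ∏ k ∈ Icc 2 (l + 1 - (r + 1)), (x i + B k)) *
        (if l = r then 1 else if r < l ∧ l ≤ j.val then B (l + 1 - r) - A (l + 1) else 0)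
      with hF
    have hsum : ∑ l : Fin n, G n x A B (r + 1) i l * U n A B r l j = ∑ l ∈ range n, F l := by
      rw [← Fin.sum_univ_eq_sum_range]
      refine Finset.sum_congr rfl fun l _ => ?_
      simp only [G, U, Matrix.of_apply, hF, if_neg h]
    have hsub : insert r (Icc (r + 1) j.val) ⊆ range n := by
      intro l hl
      simp only [mem_insert, mem_Icc] at hl
      simp only [mem_range]
      omega
    have hzero : ∀ l ∈ range n, l ∉ insert r (Icc (r + 1) j.val) → F l = 0 := by
      intro l _ hl
      have h1 : l ≠ r := fun e => hl (by rw [e]; exact mem_insert_self _ _)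
      have h2 : ¬ (r < l ∧ l ≤ j.val) := fun e =>
        hl (Finset.mem_insert_of_mem (Finset.mem_Icc.mpr ⟨by omega, e.2⟩))
      simp only [hF]
      rw [if_neg h1, if_neg h2, mul_zero]
    rw [hsum, ← Finset.sum_subset hsub hzero,
      Finset.sum_insert (by simp : r ∉ Icc (r + 1) j.val)]
    simp only [G, Matrix.of_apply]
    rw [tele n r (x i) A B j.val (le_of_lt hrj) hjn]
    congr 1
    · simp only [hF]
      rw [Nat.sub_self, Finset.Icc_eq_empty (by omega : ¬ (2 : ℕ) ≤ 0)]
      simp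
    · refine Finset.sum_congr rfl fun l hl => ?_
      simp only [mem_Icc] at hl
      simp only [hF]
      rw [if_neg (by omega), if_pos ⟨by omega, hl.2⟩,
        show l + 1 - (r + 1) = l - r by omega]
      ring

lemma detU (n : ℕ) (A B : ℕ → R) (r : ℕ) :
    (U n A B r).det =
      ∏ j : Fin n, (if j.val ≤ r then (1 : R) else B (j.val + 1 - r) - A (j.val + 1)) := by
  rw [Matrix.det_of_upperTriangular]
  · refine Finset.prod_congr rfl fun j _ => ?_
    by_cases h1 : j.val ≤ r
    · simp [U, h1]
    · simp only [U, Matrix.of_apply, if_neg h1]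
      rw [if_neg (by omega), if_pos ⟨by omega, le_refl _⟩]
  · intro a b hab
    have hv : (b : ℕ) < (a : ℕ) := hab
    simp only [U, Matrix.of_apply]
    by_cases h1 : b.val ≤ r
    · rw [if_pos h1, if_neg (show ¬ a = b from fun e => by
        subst e; exact absurd hv (lt_irrefl _))]
    · rw [if_neg h1, if_neg (by omega), if_neg (by omega)]

lemma iter (n : ℕ) (x : Fin n → R) (A B : ℕ → R) (t : ℕ) :
    (G n x A B 0).det =
      (∏ r ∈ range t,
        ∏ j : Fin n, (if j.val ≤ r then (1 : R) else B (j.val + 1 - r) - A (j.val + 1))) *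
        (G n x A B t).det := by
  induction t with
  | zero => simp
  | succ t ih =>
    rw [ih, factor n x A B t, Matrix.det_mul, detU, Finset.prod_range_succ]
    ring

lemma detPure (n : ℕ) (x : Fin n → R) (A : ℕ → R) :
    (Matrix.of fun i j : Fin n => ∏ k ∈ Icc (j.val + 2) n, (x i + A k)).det
      = ∏ i : Fin n, ∏ j ∈ Ioi i, (x i - x j) := by
  nontriviality R
  classical
  set p : Fin n → Polynomial R :=
    fun b => ∏ k ∈ Icc (n - b.val + 1) n, (Polynomial.X + Polynomial.C (A k)) with hp
  have hmonic : ∀ b, (p b).Monic := fun b =>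
    Polynomial.monic_prod_of_monic _ _ fun k _ => Polynomial.monic_X_add_C _
  have hdeg : ∀ b : Fin n, (p b).natDegree = b.val := by
    intro b
    have hb := b.isLt
    rw [hp, Polynomial.natDegree_prod_of_monic _ _ fun k _ => Polynomial.monic_X_add_C _,
      Finset.sum_congr rfl fun k _ => Polynomial.natDegree_X_add_C (A k),
      Finset.sum_const, smul_eq_mul, mul_one, Nat.card_Icc]
    omega
  have key := Matrix.det_eval_matrixOfPolynomials_eq_det_vandermonde
    (fun a : Fin n => x (Fin.rev a)) p hdeg hmonic
  have hsubm : (Matrix.of fun i j : Fin n => ∏ k ∈ Icc (j.val + 2) n, (x i + A k)) =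
      (Matrix.of fun a b : Fin n =>
        (p b).eval ((fun a : Fin n => x (Fin.rev a)) a)).submatrix Fin.revPerm Fin.revPerm := by
    ext i j
    simp only [Matrix.submatrix_apply, Matrix.of_apply, Fin.revPerm_apply, Fin.rev_rev, hp,
      Polynomial.eval_prod, Polynomial.eval_add, Polynomial.eval_X, Polynomial.eval_C]
    have hj := j.isLt
    have : Icc (j.val + 2) n = Icc (n - (Fin.rev j).val + 1) n := by
      rw [Fin.val_rev]
      congr 1
      omega
    rw [this]
  rw [hsubm, Matrix.det_submatrix_equiv_self, ← key, Matrix.det_vandermonde]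
  rw [Finset.prod_sigma', Finset.prod_sigma']
  refine Finset.prod_nbij' (fun q => ⟨q.2.rev, q.1.rev⟩) (fun q => ⟨q.2.rev, q.1.rev⟩)
    ?_ ?_ ?_ ?_ ?_
  · intro q hq
    simp only [Finset.mem_sigma, Finset.mem_univ, Finset.mem_Ioi, true_and] at *
    exact Fin.rev_lt_rev.mpr hq
  · intro q hq
    simp only [Finset.mem_sigma, Finset.mem_univ, Finset.mem_Ioi, true_and] at *
    exact Fin.rev_lt_rev.mpr hq
  · intro q _; simp [Fin.rev_rev]
  · intro q _; simp [Fin.rev_rev]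
  · intro q _; rfl

lemma prodB (n : ℕ) (A B : ℕ → R) :
    (∏ r ∈ range n,
      ∏ j : Fin n, (if j.val ≤ r then (1 : R) else B (j.val + 1 - r) - A (j.val + 1)))
      = ∏ i ∈ Icc 2 n, ∏ j ∈ Icc i n, (B i - A j) := by
  have h1 : ∀ r, (∏ j : Fin n, (if j.val ≤ r then (1 : R) else B (j.val + 1 - r) - A (j.val + 1)))
      = ∏ j ∈ Ico (r + 1) n, (B (j + 1 - r) - A (j + 1)) := by
    intro r
    rw [Fin.prod_univ_eq_prod_range
      (fun j => if j ≤ r then (1 : R) else B (j + 1 - r) - A (j + 1)) n]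
    have hs : Ico (r + 1) n ⊆ range n := by
      intro l hl; simp only [mem_Ico] at hl; simp only [mem_range]; omega
    rw [← Finset.prod_subset hs (fun l hl hnl => if_pos (by
      simp only [mem_range] at hl; simp only [mem_Ico] at hnl; omega))]
    exact Finset.prod_congr rfl fun l hl => if_neg (by simp only [mem_Ico] at hl; omega)
  rw [Finset.prod_congr rfl fun r _ => h1 r]
  rw [Finset.prod_sigma', Finset.prod_sigma']
  refine Finset.prod_nbij' (fun q => ⟨q.2 + 1 - q.1, q.2 + 1⟩) (fun q => ⟨q.2 - q.1, q.2 - 1⟩)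
    ?_ ?_ ?_ ?_ ?_
  · intro q hq
    simp only [Finset.mem_sigma, mem_range, mem_Ico, mem_Icc] at *
    omega
  · intro q hq
    simp only [Finset.mem_sigma, mem_range, mem_Ico, mem_Icc] at *
    omega
  · intro q hq
    simp only [Finset.mem_sigma, mem_range, mem_Ico] at hq
    refine Sigma.ext ?_ (heq_of_eq ?_) <;> · simp; try omega
  · intro q hq
    simp only [Finset.mem_sigma, mem_Icc] at hq
    refine Sigma.ext ?_ (heq_of_eq ?_) <;> · simp; try omega
  · intro q _; rfl

end Stmt9

/-- Krattenthaler's determinant evaluation, Lemma 3 of "Advanced determinant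
calculus": with rows/columns indexed by `1 ≤ i,j ≤ n` (here `i = i₀+1`, `j = j₀+1` for
`i₀ j₀ : Fin n`),
`det((x_i+A_n)⋯(x_i+A_{j+1})·(x_i+B_j)⋯(x_i+B_2)) = Δ_n(x)·∏_{2≤i≤j≤n}(B_i - A_j)`. -/
theorem stmt_9 {R : Type*} [CommRing R] (n : ℕ) (x : Fin n → R) (A B : ℕ → R) :
    Matrix.det (Matrix.of fun i j : Fin n =>
        (∏ k ∈ Finset.Icc (j.val + 2) n, (x i + A k)) *
          ∏ k ∈ Finset.Icc 2 (j.val + 1), (x i + B k))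
      = (∏ i : Fin n, ∏ j ∈ Finset.Ioi i, (x i - x j)) *
        ∏ i ∈ Finset.Icc 2 n, ∏ j ∈ Finset.Icc i n, (B i - A j) := by
  have h0 : (Matrix.of fun i j : Fin n =>
      (∏ k ∈ Finset.Icc (j.val + 2) n, (x i + A k)) *
        ∏ k ∈ Finset.Icc 2 (j.val + 1), (x i + B k)) = Stmt9.G n x A B 0 := by
    ext i j
    simp [Stmt9.G]
  have hpure : Stmt9.G n x A B n =
      Matrix.of fun i j : Fin n => ∏ k ∈ Finset.Icc (j.val + 2) n, (x i + A k) := by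
    ext i j
    simp only [Stmt9.G, Matrix.of_apply]
    rw [Finset.Icc_eq_empty (by have := j.isLt; omega : ¬ (2 : ℕ) ≤ j.val + 1 - n),
      Finset.prod_empty, mul_one]
  rw [h0, Stmt9.iter n x A B n, Stmt9.prodB, hpure, Stmt9.detPure]
  ring
end

section
/- More generally, for distinct reals y_1,...,y_n, x_1,...,x_m with Q(z) := ∏_1^m(z-x_i)∏_1^n(z-y_j), and for 0 ≤ k ≤ n, one has Δ_n^{(n-k)-hat}(y) / Δ_{n+m}(x,y) = (-1)^{m(m-1)/2} · Δ_m(x) · e_k(y) / ∏_{ℓ=1}^m Q'(x_ℓ), where Δ_n^{ĵ}(y) denotes the n×n determinant of powers y_i^{n}, ..., y_i^{0} with the column of exponent j removed, which equals Δ_n(y)·e_{n-j}(y). -/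
open Finset Polynomial

lemma prod_Ioi_eq_prod_ite {N : ℕ} (f : Fin N → Fin N → ℝ) :
    ∏ i, ∏ j ∈ Finset.Ioi i, f i j
      = ∏ p : Fin N × Fin N, if p.1 < p.2 then f p.1 p.2 else 1 := by
  rw [Fintype.prod_prod_type]
  refine Finset.prod_congr rfl fun i _ => ?_
  rw [← Finset.prod_filter]
  congr 1
  ext j
  simp

lemma det_rev_vandermonde {N : ℕ} (v : Fin N → ℝ) :
    Matrix.det (Matrix.of fun i j : Fin N => v i ^ (N - 1 - (j : ℕ)))
      = ∏ i, ∏ j ∈ Finset.Ioi i, (v i - v j) := by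
  have h1 : (Matrix.of fun i j : Fin N => v i ^ (N - 1 - (j : ℕ)))
      = (Matrix.vandermonde v).submatrix id Fin.revPerm := by
    ext i j
    simp [Matrix.vandermonde, Fin.revPerm, Fin.val_rev]
    congr 1
    omega
  have h2 : Matrix.vandermonde (v ∘ Fin.rev)
      = (Matrix.vandermonde v).submatrix Fin.revPerm id := by
    ext i j; rfl
  have h3 : Matrix.det (Matrix.vandermonde (v ∘ Fin.rev))
      = Matrix.det ((Matrix.of fun i j : Fin N => v i ^ (N - 1 - (j : ℕ)))) := by
    rw [h1, h2, Matrix.det_permute, Matrix.det_permute']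
  rw [← h3, Matrix.det_vandermonde]
  rw [prod_Ioi_eq_prod_ite, prod_Ioi_eq_prod_ite (f := fun i j => v i - v j)]
  refine Fintype.prod_equiv ((Equiv.prodComm _ _).trans (Fin.revPerm.prodCongr Fin.revPerm))
    _ _ fun p => ?_
  simp only [Equiv.trans_apply, Equiv.prodComm_apply, Equiv.prodCongr_apply, Prod.map, Prod.swap]
  by_cases h : p.1 < p.2
  · rw [if_pos h, if_pos (by simpa [Fin.rev_lt_rev] using h)]
    simp [Function.comp]
  · rw [if_neg h, if_neg (by simpa [Fin.rev_lt_rev] using h)]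

lemma det_snoc_eval (n : ℕ) (y : Fin n → ℝ) (t : ℝ) :
    Matrix.det (Matrix.of fun i j : Fin (n+1) => (Fin.snoc y t : Fin (n+1) → ℝ) i ^ (n - (j : ℕ)))
      = (∏ i, ∏ j ∈ Finset.Ioi i, (y i - y j)) * ∏ i, (y i - t) := by
  have h := det_rev_vandermonde (N := n + 1) (Fin.snoc y t)
  simp only [Nat.add_sub_cancel] at h
  rw [h, prod_Ioi_eq_prod_ite, Fintype.prod_prod_type]
  rw [Fin.prod_univ_castSucc]
  have hlast : ∀ b : Fin (n+1), ¬ (Fin.last n < b) := fun b => by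
    simp [Fin.lt_def, Fin.le_last, Nat.not_lt, Fin.is_le]
  simp only [hlast, if_neg, prod_const_one, mul_one]
  have hinner : ∀ a : Fin n,
      (∏ b : Fin (n+1), if Fin.castSucc a < b then (Fin.snoc y t : Fin (n+1) → ℝ) (Fin.castSucc a) - (Fin.snoc y t : Fin (n+1) → ℝ) b else 1)
        = (∏ b : Fin n, if a < b then y a - y b else 1) * (y a - t) := by
    intro a
    rw [Fin.prod_univ_castSucc]
    simp [Fin.snoc_castSucc, Fin.snoc_last, Fin.castSucc_lt_castSucc_iff,
      Fin.castSucc_lt_last]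
  rw [Finset.prod_congr rfl (fun a _ => hinner a), Finset.prod_mul_distrib]
  rw [prod_Ioi_eq_prod_ite (f := fun i j => y i - y j), Fintype.prod_prod_type]
  simp
  -- leftover

lemma part1 (n k : ℕ) (hk : k ≤ n) (y : Fin n → ℝ) :
    Matrix.det (Matrix.of fun i c : Fin n =>
        y i ^ (if c.val < k then n - c.val else n - 1 - c.val))
      = (∏ i : Fin n, ∏ j ∈ Finset.Ioi i, (y i - y j)) *
          ∑ s ∈ Finset.powersetCard k (Finset.univ : Finset (Fin n)), ∏ i ∈ s, y i := by
  set Δ : ℝ := ∏ i : Fin n, ∏ j ∈ Finset.Ioi i, (y i - y j) with hΔ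
  set E : ℝ := ∑ s ∈ Finset.powersetCard k (Finset.univ : Finset (Fin n)), ∏ i ∈ s, y i with hE
  set D : Fin (n+1) → ℝ := fun j =>
    Matrix.det (Matrix.of fun i c : Fin n => y i ^ (n - (j.succAbove c : ℕ))) with hD
  set P : Polynomial ℝ :=
    ∑ j : Fin (n+1), Polynomial.C ((-1:ℝ)^(n + (j:ℕ)) * D j) * Polynomial.X ^ (n - (j:ℕ)) with hP
  set Q : Polynomial ℝ := Polynomial.C Δ * ∏ i : Fin n, (Polynomial.C (y i) - Polynomial.X)
    with hQ
  have hPQ : P = Q := by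
    apply Polynomial.funext
    intro t
    have hdet := det_snoc_eval n y t
    rw [Matrix.det_succ_row _ (Fin.last n)] at hdet
    simp only [Fin.succAbove_last, Fin.val_last, Fin.snoc_last, Matrix.of_apply] at hdet
    have hsub : ∀ j : Fin (n+1),
        Matrix.det ((Matrix.of fun i j : Fin (n+1) =>
            (Fin.snoc y t : Fin (n+1) → ℝ) i ^ (n - (j : ℕ))).submatrix Fin.castSucc j.succAbove)
          = D j := by
      intro j
      congr 1
      ext i c
      simp [Fin.snoc_castSucc]
    rw [Finset.sum_congr rfl (fun j _ => by rw [hsub j])] at hdet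
    simp only [hP, hQ, Polynomial.eval_finset_sum, Polynomial.eval_mul, Polynomial.eval_C,
      Polynomial.eval_pow, Polynomial.eval_X, Polynomial.eval_prod, Polynomial.eval_sub]
    rw [← hdet]
    refine Finset.sum_congr rfl fun j _ => ?_
    rw [pow_add]
    ring
  have hcoeff := congrArg (fun p => Polynomial.coeff p (n - k)) hPQ
  simp only [hP, hQ, Polynomial.finset_sum_coeff, Polynomial.coeff_C_mul,
    Polynomial.coeff_X_pow] at hcoeff
  rw [Finset.sum_eq_single (⟨k, by omega⟩ : Fin (n+1))] at hcoeff
  · -- simplify LHS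
    rw [if_pos rfl, mul_one] at hcoeff
    -- RHS : coeff of C Δ * ∏ (C y i - X)
    have hcard : (Finset.univ : Finset (Fin n)).card = n := by simp
    have hprod : (∏ i : Fin n, (Polynomial.C (y i) - Polynomial.X))
        = (-1:Polynomial ℝ)^n * ∏ i : Fin n, (Polynomial.X + Polynomial.C (-(y i))) := by
      have h1 : (∏ i : Fin n, (Polynomial.C (y i) - Polynomial.X))
          = ∏ i : Fin n, ((-1) * (Polynomial.X + Polynomial.C (-(y i)))) :=
        Finset.prod_congr rfl fun i _ => by rw [map_neg]; ring
      rw [h1, Finset.prod_mul_distrib, Finset.prod_const]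
      simp
    have hprodcoeff : (∏ i : Fin n, (Polynomial.X + Polynomial.C (-(y i)))).coeff (n - k)
        = (-1:ℝ)^k * E := by
      rw [Finset.prod_X_add_C_coeff _ _ (by rw [hcard]; omega)]
      rw [hcard]
      have : n - (n - k) = k := by omega
      rw [this, hE, Finset.mul_sum]
      refine Finset.sum_congr rfl fun s hs => ?_
      have hsc : s.card = k := (Finset.mem_powersetCard.mp hs).2
      rw [← hsc, ← Finset.prod_const, ← Finset.prod_mul_distrib]
      exact Finset.prod_congr rfl fun i _ => by ring
    have hneg : ((-1 : Polynomial ℝ))^n = Polynomial.C ((-1:ℝ)^n) := by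
      rw [map_pow, map_neg, map_one]
    rw [hprod, hneg, Polynomial.coeff_C_mul, hprodcoeff] at hcoeff
    have hDk : (Matrix.of fun i c : Fin n =>
        y i ^ (if c.val < k then n - c.val else n - 1 - c.val)).det
        = D ⟨k, by omega⟩ := by
      congr 1
      ext i c
      simp only [Matrix.of_apply]
      have hval : (((⟨k, by omega⟩ : Fin (n+1)).succAbove c : Fin (n+1)) : ℕ)
          = if (c:ℕ) < k then (c:ℕ) else (c:ℕ)+1 := by
        by_cases hc : (c : ℕ) < k
        · simp [Fin.succAbove, Fin.lt_def, hc]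
        · simp [Fin.succAbove, Fin.lt_def, hc]
      rw [hval]
      congr 1
      by_cases hc : (c : ℕ) < k
      · simp [hc]
      · simp [hc]
        omega
    rw [hDk]
    have hcoeff2 : (-1:ℝ)^(n+k) * D ⟨k, by omega⟩ = (-1:ℝ)^(n+k) * ((Δ) * E) := by
      rw [hcoeff, pow_add]
      ring
    exact mul_left_cancel₀ (pow_ne_zero _ (by norm_num)) hcoeff2
  · intro j _ hj
    have : ¬ (n - k = n - (j:ℕ)) := by
      have hj' : (j:ℕ) ≠ k := fun h => hj (Fin.ext h)
      have := j.isLt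
      omega
    rw [if_neg this, mul_zero]
  · intro h
    exact absurd (Finset.mem_univ _) h

lemma delta_append (m n : ℕ) (x : Fin m → ℝ) (y : Fin n → ℝ) :
    (∏ i : Fin (m + n), ∏ j ∈ Finset.Ioi i,
        (Fin.append x y i - Fin.append x y j))
      = ((∏ i : Fin m, ∏ j ∈ Finset.Ioi i, (x i - x j)) *
          (∏ a : Fin m, ∏ b : Fin n, (x a - y b))) *
          ∏ i : Fin n, ∏ j ∈ Finset.Ioi i, (y i - y j) := by
  set v := Fin.append x y with hv
  rw [prod_Ioi_eq_prod_ite]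
  have step : (∏ p : Fin (m+n) × Fin (m+n), if p.1 < p.2 then v p.1 - v p.2 else 1)
      = ∏ q : (Fin m ⊕ Fin n) × (Fin m ⊕ Fin n),
          (if finSumFinEquiv q.1 < finSumFinEquiv q.2
            then v (finSumFinEquiv q.1) - v (finSumFinEquiv q.2) else 1) :=
    (Fintype.prod_equiv (finSumFinEquiv.prodCongr finSumFinEquiv) _ _ (fun q => rfl)).symm
  rw [step, Fintype.prod_prod_type, Fintype.prod_sum_type]
  have inl_eq : ∀ a : Fin m, v (finSumFinEquiv (Sum.inl a)) = x a := by
    intro a; rw [finSumFinEquiv_apply_left, hv, Fin.append_left]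
  have inr_eq : ∀ b : Fin n, v (finSumFinEquiv (Sum.inr b)) = y b := by
    intro b; rw [finSumFinEquiv_apply_right, hv, Fin.append_right]
  have h1 : ∀ a : Fin m,
      (∏ q2 : Fin m ⊕ Fin n, if finSumFinEquiv (Sum.inl a) < finSumFinEquiv q2
          then v (finSumFinEquiv (Sum.inl a)) - v (finSumFinEquiv q2) else 1)
        = (∏ b : Fin m, if a < b then x a - x b else 1) * ∏ b : Fin n, (x a - y b) := by
    intro a
    rw [Fintype.prod_sum_type]
    congr 1
    · refine Finset.prod_congr rfl fun b _ => ?_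
      have hiff : (finSumFinEquiv (Sum.inl a : Fin m ⊕ Fin n) < finSumFinEquiv (Sum.inl b : Fin m ⊕ Fin n)) ↔ a < b := by
        simp only [finSumFinEquiv_apply_left, Fin.lt_def, Fin.coe_castAdd]
      rw [inl_eq, inl_eq, if_congr hiff rfl rfl]
    · refine Finset.prod_congr rfl fun b _ => ?_
      rw [if_pos, inl_eq, inr_eq]
      simp only [finSumFinEquiv_apply_left, finSumFinEquiv_apply_right, Fin.lt_def,
        Fin.coe_castAdd, Fin.coe_natAdd]
      omega
  have h2 : ∀ a : Fin n,
      (∏ q2 : Fin m ⊕ Fin n, if finSumFinEquiv (Sum.inr a) < finSumFinEquiv q2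
          then v (finSumFinEquiv (Sum.inr a)) - v (finSumFinEquiv q2) else 1)
        = ∏ b : Fin n, if a < b then y a - y b else 1 := by
    intro a
    rw [Fintype.prod_sum_type]
    have hfalse : ∀ b : Fin m, ¬ (finSumFinEquiv (Sum.inr a) < finSumFinEquiv (Sum.inl b)) := by
      intro b
      simp only [finSumFinEquiv_apply_left, finSumFinEquiv_apply_right, Fin.lt_def,
        Fin.coe_castAdd, Fin.coe_natAdd]
      omega
    simp only [hfalse, if_false, prod_const_one, one_mul]
    refine Finset.prod_congr rfl fun b _ => ?_
    have hiff : (finSumFinEquiv (Sum.inr a : Fin m ⊕ Fin n) < finSumFinEquiv (Sum.inr b : Fin m ⊕ Fin n)) ↔ a < b := by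
      simp only [finSumFinEquiv_apply_right, Fin.lt_def, Fin.coe_natAdd]
      omega
    rw [inr_eq, inr_eq, if_congr hiff rfl rfl]
  rw [Finset.prod_congr rfl (fun a _ => h1 a), Finset.prod_congr rfl (fun a _ => h2 a),
    Finset.prod_mul_distrib]
  rw [prod_Ioi_eq_prod_ite (f := fun i j => x i - x j),
    prod_Ioi_eq_prod_ite (f := fun i j => y i - y j), Fintype.prod_prod_type,
    Fintype.prod_prod_type]

lemma neg_pow_count (m : ℕ) :
    (∏ i : Fin m, ∏ j ∈ Finset.Ioi i, (-1 : ℝ)) = (-1 : ℝ) ^ (m * (m - 1) / 2) := by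
  have h1 : ∀ i : Fin m, (∏ j ∈ Finset.Ioi i, (-1 : ℝ)) = (-1:ℝ) ^ (m - 1 - (i:ℕ)) := by
    intro i
    rw [Finset.prod_const, Fin.card_Ioi]
  rw [Finset.prod_congr rfl (fun i _ => h1 i), Finset.prod_pow_eq_pow_sum]
  congr 1
  rw [Fin.sum_univ_eq_sum_range (fun i => m - 1 - i) m]
  have := Finset.sum_range_reflect (fun i => i) m
  calc ∑ i ∈ Finset.range m, (m - 1 - i) = ∑ i ∈ Finset.range m, i := by
        rw [← Finset.sum_range_reflect (fun i => i) m]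
    _ = m * (m - 1) / 2 := Finset.sum_range_id m

lemma off_diag_prod (m : ℕ) (x : Fin m → ℝ) :
    (∏ l : Fin m, ∏ a : Fin m, if a ≠ l then x l - x a else 1)
      = (-1 : ℝ) ^ (m * (m - 1) / 2) * (∏ i : Fin m, ∏ j ∈ Finset.Ioi i, (x i - x j)) ^ 2 := by
  have key : ∀ l a : Fin m, (if a ≠ l then x l - x a else 1)
      = (if l < a then x l - x a else 1) * (if a < l then x l - x a else 1) := by
    intro l a
    rcases lt_trichotomy l a with h | h | h
    · rw [if_pos h.ne', if_pos h, if_neg (asymm h), mul_one]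
    · rw [if_neg (by simp [h]), if_neg (by simp [h]), if_neg (by simp [h]), mul_one]
    · rw [if_pos h.ne, if_neg (asymm h), if_pos h, one_mul]
  simp_rw [key, Finset.prod_mul_distrib]
  have hswap : (∏ l : Fin m, ∏ a : Fin m, if a < l then x l - x a else 1)
      = ∏ l : Fin m, ∏ a : Fin m, if l < a then x a - x l else 1 := Finset.prod_comm
  rw [hswap, ← Finset.prod_mul_distrib]
  simp_rw [← Finset.prod_mul_distrib]
  have key2 : ∀ l a : Fin m,
      ((if l < a then x l - x a else 1) * (if l < a then x a - x l else 1))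
        = (if l < a then (-1:ℝ) else 1) * ((if l < a then x l - x a else 1) *
            (if l < a then x l - x a else 1)) := by
    intro l a
    by_cases h : l < a
    · simp only [if_pos h]; ring
    · simp only [if_neg h]; ring
  simp_rw [key2, Finset.prod_mul_distrib]
  have e1 : (∏ l : Fin m, ∏ a : Fin m, if l < a then (-1:ℝ) else 1)
      = (-1:ℝ) ^ (m * (m - 1) / 2) := by
    rw [← neg_pow_count m]
    refine Finset.prod_congr rfl fun l _ => ?_
    rw [← Finset.prod_filter]
    congr 1
    ext j; simp
  have e2 : (∏ l : Fin m, ∏ a : Fin m, if l < a then x l - x a else 1)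
      = ∏ i : Fin m, ∏ j ∈ Finset.Ioi i, (x i - x j) := by
    refine Finset.prod_congr rfl fun l _ => ?_
    rw [← Finset.prod_filter]
    congr 1
    ext j; simp
  rw [e1, e2]
  ring

lemma prodQprime (m n : ℕ) (x : Fin m → ℝ) (y : Fin n → ℝ) :
    (∏ l : Fin m, (Polynomial.derivative
        ((∏ i : Fin m, (Polynomial.X - Polynomial.C (x i))) *
          ∏ j : Fin n, (Polynomial.X - Polynomial.C (y j)))).eval (x l))
      = (∏ l : Fin m, ∏ a : Fin m, if a ≠ l then x l - x a else 1) *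
          ∏ a : Fin m, ∏ b : Fin n, (x a - y b) := by
  set v : Fin (m + n) → ℝ := Fin.append x y with hv
  have hnodal : (∏ i : Fin m, (Polynomial.X - Polynomial.C (x i))) *
      ∏ j : Fin n, (Polynomial.X - Polynomial.C (y j))
        = Lagrange.nodal Finset.univ v := by
    rw [Lagrange.nodal_eq, Fin.prod_univ_add (f := fun i => Polynomial.X - Polynomial.C (v i))]
    simp [hv, Fin.append_left, Fin.append_right]
  have hl : ∀ l : Fin m, (Polynomial.derivative (Lagrange.nodal Finset.univ v)).eval (x l)
      = ∏ j : Fin (m + n), if j ≠ Fin.castAdd n l then x l - v j else 1 := by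
    intro l
    have hx : x l = v (Fin.castAdd n l) := (Fin.append_left x y l).symm
    rw [hx, Lagrange.eval_nodal_derivative_eval_node_eq (Finset.mem_univ _),
      Lagrange.eval_nodal, ← Finset.filter_ne', Finset.prod_filter]
  have hsplit : ∀ l : Fin m,
      (∏ j : Fin (m + n), if j ≠ Fin.castAdd n l then x l - v j else 1)
        = (∏ a : Fin m, if a ≠ l then x l - x a else 1) * ∏ b : Fin n, (x l - y b) := by
    intro l
    rw [Fin.prod_univ_add (f := fun j => if j ≠ Fin.castAdd n l then x l - v j else 1)]
    congr 1
    · refine Finset.prod_congr rfl fun a _ => ?_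
      have hiff : (Fin.castAdd n a ≠ Fin.castAdd n l) ↔ a ≠ l := by
        simp [Fin.ext_iff]
      rw [if_congr hiff rfl rfl, hv, Fin.append_left]
    · refine Finset.prod_congr rfl fun b _ => ?_
      rw [if_pos (by simp [Fin.ext_iff]; omega), hv, Fin.append_right]
  rw [hnodal]
  rw [Finset.prod_congr rfl (fun l _ => (hl l).trans (hsplit l)), Finset.prod_mul_distrib]


/-- for distinct reals `y_1,...,y_n, x_1,...,x_m`,
`Q(z) = ∏(z-x_i)∏(z-y_j)` and `0 ≤ k ≤ n`, the Vandermonde determinant with the column of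
exponent `n-k` removed (columns carry exponents `n, n-1, ..., 0` with `n-k` omitted)
satisfies `Δ_n^{(n-k)-hat}(y) = Δ_n(y)·e_k(y)` and
`Δ_n^{(n-k)-hat}(y)/Δ_{n+m}(x,y) = (-1)^{m(m-1)/2}·Δ_m(x)·e_k(y)/∏_ℓ Q'(x_ℓ)`. -/
theorem stmt_11 (m n k : ℕ) (hk : k ≤ n) (x : Fin m → ℝ) (y : Fin n → ℝ)
    (hdist : Function.Injective (Fin.append x y)) :
    (Matrix.det (Matrix.of fun i c : Fin n =>
        y i ^ (if c.val < k then n - c.val else n - 1 - c.val))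
      = (∏ i : Fin n, ∏ j ∈ Finset.Ioi i, (y i - y j)) *
          ∑ s ∈ Finset.powersetCard k (Finset.univ : Finset (Fin n)), ∏ i ∈ s, y i) ∧
    Matrix.det (Matrix.of fun i c : Fin n =>
        y i ^ (if c.val < k then n - c.val else n - 1 - c.val)) /
        (∏ i : Fin (m + n), ∏ j ∈ Finset.Ioi i,
          (Fin.append x y i - Fin.append x y j))
      = (-1 : ℝ) ^ (m * (m - 1) / 2) *
          (∏ i : Fin m, ∏ j ∈ Finset.Ioi i, (x i - x j)) *
          (∑ s ∈ Finset.powersetCard k (Finset.univ : Finset (Fin n)), ∏ i ∈ s, y i) /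
          ∏ l : Fin m,
            (Polynomial.derivative
              ((∏ i : Fin m, (Polynomial.X - Polynomial.C (x i))) *
                ∏ j : Fin n, (Polynomial.X - Polynomial.C (y j)))).eval (x l) := by
  refine ⟨part1 n k hk y, ?_⟩
  have hxinj : Function.Injective x := by
    intro a b h
    have h2 : Fin.append x y (Fin.castAdd n a) = Fin.append x y (Fin.castAdd n b) := by
      rw [Fin.append_left, Fin.append_left, h]
    have := hdist h2
    simpa [Fin.ext_iff] using this
  have hyinj : Function.Injective y := by
    intro a b h
    have h2 : Fin.append x y (Fin.natAdd m a) = Fin.append x y (Fin.natAdd m b) := by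
      rw [Fin.append_right, Fin.append_right, h]
    have := hdist h2
    simpa [Fin.ext_iff] using this
  have hxy : ∀ (a : Fin m) (b : Fin n), x a ≠ y b := by
    intro a b h
    have h2 : Fin.append x y (Fin.castAdd n a) = Fin.append x y (Fin.natAdd m b) := by
      rw [Fin.append_left, Fin.append_right, h]
    have := hdist h2
    rw [Fin.ext_iff] at this
    simp only [Fin.coe_castAdd, Fin.coe_natAdd] at this
    omega
  have hDx : (∏ i : Fin m, ∏ j ∈ Finset.Ioi i, (x i - x j)) ≠ 0 := by
    refine Finset.prod_ne_zero_iff.mpr fun i _ => Finset.prod_ne_zero_iff.mpr fun j hj => ?_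
    exact sub_ne_zero.mpr fun h => absurd (hxinj h) (Finset.mem_Ioi.mp hj).ne
  have hDy : (∏ i : Fin n, ∏ j ∈ Finset.Ioi i, (y i - y j)) ≠ 0 := by
    refine Finset.prod_ne_zero_iff.mpr fun i _ => Finset.prod_ne_zero_iff.mpr fun j hj => ?_
    exact sub_ne_zero.mpr fun h => absurd (hyinj h) (Finset.mem_Ioi.mp hj).ne
  have hA : (∏ a : Fin m, ∏ b : Fin n, (x a - y b)) ≠ 0 := by
    refine Finset.prod_ne_zero_iff.mpr fun a _ => Finset.prod_ne_zero_iff.mpr fun b _ => ?_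
    exact sub_ne_zero.mpr (hxy a b)
  rw [part1 n k hk y, delta_append m n x y, prodQprime m n x y, off_diag_prod m x]
  rw [div_eq_div_iff
    (mul_ne_zero (mul_ne_zero hDx hA) hDy)
    (mul_ne_zero (mul_ne_zero (pow_ne_zero _ (by norm_num : (-1:ℝ) ≠ 0))
      (pow_ne_zero 2 hDx)) hA)]
  ring
end

section
/- For integers y, y_j, n, N with 0 ≤ n ≤ N-1 and 0 ≤ y - y_j ≤ N - 1 (more generally with the stated hypotheses allowing vanishing), the complete homogeneous symmetric polynomial evaluated at n ones admits the representation h_{y-y_j}(1^n) = ((N-n)!/(N-1)!) · ∑_{ℓ = B}^{y} (ℓ - y_j + 1)_{N-1} / ∏_{i = y-N+n, i ≠ ℓ}^{y} (ℓ - i), where B := max(y+n, y_1+1) - N ≤ y and y_1 ≥ y_j; equivalently, h_{y-y_j}(1^n) equals the sum of residues of the rational function ((N-n)!/(N-1)!) (z - y_j + 1)_{N-1} / (z - y)_{N-n+1} at the integer points z = y, y-1, ..., B. -/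
open Finset

lemma core_id : ∀ (m n r : ℕ), 1 ≤ m + n →
    (∑ k ∈ range (r+1),
      (-1:ℤ)^k * (m.choose k) * ((m+n-1+(r-k)).choose (m+n-1))) = (n + r - 1).choose r := by
  intro m
  induction m with
  | zero =>
    intro n r hn
    rw [Finset.sum_eq_single 0]
    · obtain ⟨n', rfl⟩ : ∃ n', n = n' + 1 := ⟨n - 1, by omega⟩
      have h1 : 0 + (n'+1) - 1 + (r - 0) = n' + r := by omega
      have h2 : 0 + (n'+1) - 1 = n' := by omega
      have h3 : n' + 1 + r - 1 = n' + r := by omega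
      rw [h1, h2, h3]
      have := Nat.choose_symm (n := n' + r) (k := n') (by omega)
      rw [show n' + r - n' = r from by omega] at this
      simp [this]
    · intro k hk hk0
      simp [Nat.choose_eq_zero_of_lt (by omega : 0 < k)]
    · intro h; simp at h
  | succ m ih =>
    intro n r hn
    match r with
    | 0 => simp
    | (r' + 1) =>
      have hM : m + 1 + n - 1 = m + n := by omega
      rw [Finset.sum_range_succ']
      have key : ∀ i ∈ range (r'+1),
          (-1:ℤ)^(i+1) * ((m+1).choose (i+1)) * ((m+1+n-1+(r'+1-(i+1))).choose (m+1+n-1))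
          = -((-1:ℤ)^i * (m.choose i) * ((m+n+(r'-i)).choose (m+n)))
            - ((-1:ℤ)^i * (m.choose (i+1)) * ((m+n+(r'-i)).choose (m+n))) := by
        intro i hi
        rw [hM, Nat.choose_succ_succ, show r'+1-(i+1) = r' - i from by omega]
        push_cast
        ring
      have hA : (∑ i ∈ range (r'+1), (-1:ℤ)^i * (m.choose i) * ((m+n+(r'-i)).choose (m+n)))
          = (n + r').choose r' := by
        have := ih (n+1) r' (by omega)
        rw [show m + (n+1) - 1 = m + n from by omega,
            show n + 1 + r' - 1 = n + r' from by omega] at this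
        exact this
      have hB : (∑ i ∈ range (r'+1), (-1:ℤ)^i * (m.choose (i+1)) * ((m+n+(r'-i)).choose (m+n)))
          = ((m+n+(r'+1)).choose (m+n)) - ((n + r' + 1).choose (r'+1)) := by
        have h2 := ih (n+1) (r'+1) (by omega)
        rw [show m + (n+1) - 1 = m + n from by omega,
            show n + 1 + (r'+1) - 1 = n + r' + 1 from by omega] at h2
        rw [Finset.sum_range_succ'] at h2
        have key2 : ∀ i ∈ range (r'+1),
            (-1:ℤ)^(i+1) * (m.choose (i+1)) * ((m+n+(r'+1-(i+1))).choose (m+n))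
            = -((-1:ℤ)^i * (m.choose (i+1)) * ((m+n+(r'-i)).choose (m+n))) := by
          intro i hi
          rw [show r'+1-(i+1) = r' - i from by omega]
          ring
        rw [Finset.sum_congr rfl key2, Finset.sum_neg_distrib] at h2
        simp only [Nat.choose_zero_right, pow_zero, one_mul, Nat.cast_one, Nat.sub_zero] at h2
        omega
      rw [Finset.sum_congr rfl key, Finset.sum_sub_distrib, Finset.sum_neg_distrib, hA, hB]
      simp only [Nat.choose_zero_right, pow_zero, one_mul, Nat.cast_one, Nat.sub_zero, hM]
      rw [show n + (r'+1) - 1 = n + r' from by omega,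
          show m + n + (r'+1) = m + n + (r'+1) from rfl]
      have hp : (((n + r') + 1).choose (r'+1) : ℤ)
          = (n+r').choose r' + (n+r').choose (r'+1) := by
        rw [Nat.choose_succ_succ]; push_cast; ring
      rw [show n + r' + 1 = (n + r') + 1 from rfl] at hp ⊢
      omega

lemma asc_eval_prod (M : ℕ) (t : ℝ) :
    (ascPochhammer ℝ M).eval t = ∏ s ∈ range M, (t + s) := by
  induction M with
  | zero => simp
  | succ M ih => rw [ascPochhammer_succ_eval, ih, Finset.prod_range_succ]

lemma prod_shift_fact (M x : ℕ) :
    ∏ s ∈ range M, ((x:ℝ) + 1 + s) = (x+M).factorial / x.factorial := by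
  induction M with
  | zero => simp [div_self (Nat.cast_ne_zero.mpr (Nat.factorial_ne_zero x) : (x.factorial:ℝ) ≠ 0)]
  | succ M ih =>
    rw [Finset.prod_range_succ, ih, show x + (M+1) = (x+M)+1 from rfl, Nat.factorial_succ]
    have hx : (x.factorial : ℝ) ≠ 0 := Nat.cast_ne_zero.mpr (Nat.factorial_ne_zero x)
    field_simp
    push_cast
    ring

lemma prod_shift_zero (M j : ℕ) (hj : j < M) :
    ∏ s ∈ range M, (-(j:ℝ) + s) = 0 :=
  Finset.prod_eq_zero (Finset.mem_range.mpr hj) (by simp)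

lemma PL1 (c : ℤ) (d : ℕ) :
    ∏ i ∈ Finset.Icc (c - d) (c - 1), ((c:ℝ) - (i:ℝ)) = d.factorial := by
  induction d with
  | zero => rw [Finset.Icc_eq_empty (by omega)]; simp
  | succ d ih =>
    have hins : Finset.Icc (c - (d+1:ℕ)) (c-1)
        = insert (c - (d+1:ℕ)) (Finset.Icc (c - (d:ℕ)) (c-1)) := by
      ext i; simp only [Finset.mem_Icc, Finset.mem_insert]; omega
    rw [hins, Finset.prod_insert (by simp only [Finset.mem_Icc]; omega), ih, Nat.factorial_succ]
    push_cast
    ring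

lemma PL2 (c : ℤ) (e : ℕ) :
    ∏ i ∈ Finset.Icc (c + 1) (c + e), ((c:ℝ) - (i:ℝ)) = (-1)^e * e.factorial := by
  induction e with
  | zero => rw [Finset.Icc_eq_empty (by omega)]; simp
  | succ e ih =>
    have hins : Finset.Icc (c+1) (c + (e+1:ℕ))
        = insert (c + (e+1:ℕ)) (Finset.Icc (c+1) (c + (e:ℕ))) := by
      ext i; simp only [Finset.mem_Icc, Finset.mem_insert]; omega
    rw [hins, Finset.prod_insert (by simp only [Finset.mem_Icc]; omega), ih, Nat.factorial_succ]
    push_cast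
    ring

lemma Dprod (a b c : ℤ) (h1 : a ≤ c) (h2 : c ≤ b) :
    ∏ i ∈ (Finset.Icc a b).erase c, ((c:ℝ) - (i:ℝ))
      = ((c-a).toNat.factorial : ℝ) * ((-1)^((b-c).toNat) * ((b-c).toNat.factorial : ℝ)) := by
  have hsplit : (Finset.Icc a b).erase c = Finset.Icc a (c-1) ∪ Finset.Icc (c+1) b := by
    ext i
    simp only [Finset.mem_erase, Finset.mem_Icc, Finset.mem_union]
    omega
  rw [hsplit, Finset.prod_union (by
    simp only [Finset.disjoint_left, Finset.mem_Icc]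
    intro i hi hi2
    omega)]
  have e1 := PL1 c ((c-a).toNat)
  have e2 := PL2 c ((b-c).toNat)
  rw [show (((c-a).toNat : ℕ) : ℤ) = c - a from by omega, show c - (c - a) = a from by ring] at e1
  rw [show (((b-c).toNat : ℕ) : ℤ) = b - c from by omega, show c + (b - c) = b from by ring] at e2
  rw [e1, e2]
noncomputable def Gaux (N m rn : ℕ) (k : ℕ) : ℝ :=
  (-1)^k * (m.choose k) * ((N-1+rn-k).choose (N-1)) * ((N-1).factorial / m.factorial)

/-- Pointwise evaluation of one residue term. -/
lemma term_eval (N n m rn : ℕ) (hnN : n < N) (hm : m = N - n) (y yj l : ℤ)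
    (hr : 0 ≤ y - yj) (hrn : rn = (y - yj).toNat)
    (k : ℕ) (hk : (y - l).toNat = k) (hkm : k ≤ m) (hkNr : k ≤ N - 1 + rn) (hly : l ≤ y) :
    (ascPochhammer ℝ (N - 1)).eval ((l : ℝ) - (yj : ℝ) + 1) /
        ∏ i ∈ (Finset.Icc (y - N + n) y).erase l, ((l : ℝ) - (i : ℝ))
      = Gaux N m rn k := by
  have hl' : l = y - (k:ℤ) := by omega
  have hIcc : y - (N:ℤ) + (n:ℤ) = y - (m:ℤ) := by omega
  rw [hIcc, Dprod (y - (m:ℤ)) y l (by omega) (by omega),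
      show (l - (y - (m:ℤ))).toNat = m - k from by omega,
      show (y - l).toNat = k from hk]
  rw [asc_eval_prod]
  have hmk : (((m-k).factorial : ℝ)) ≠ 0 := Nat.cast_ne_zero.mpr (Nat.factorial_ne_zero _)
  have hk1 : ((k.factorial : ℝ)) ≠ 0 := Nat.cast_ne_zero.mpr (Nat.factorial_ne_zero _)
  have hs : ((-1:ℝ))^k ≠ 0 := pow_ne_zero _ (by norm_num)
  have hsq : ((-1:ℝ))^k * ((-1:ℝ))^k = 1 := by
    rw [← pow_add, ← two_mul, pow_mul]; norm_num
  rcases le_or_gt k rn with hkr | hkr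
  · -- nonvanishing case
    obtain ⟨x, hx⟩ : ∃ x : ℕ, rn - k = x := ⟨_, rfl⟩
    have ht : (l:ℝ) - (yj:ℝ) + 1 = (x:ℝ) + 1 := by
      have h' : l - yj = (x:ℤ) := by omega
      have := congrArg (fun z : ℤ => (z:ℝ)) h'
      push_cast at this
      linarith
    rw [show (∏ s ∈ range (N-1), ((l:ℝ) - (yj:ℝ) + 1 + (s:ℕ)))
          = ∏ s ∈ range (N-1), ((x:ℝ) + 1 + (s:ℕ)) from
        Finset.prod_congr rfl (fun s _ => by rw [ht]), prod_shift_fact,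
        show x + (N-1) = (N-1) + x from by omega]
    have hxf : ((x.factorial : ℝ)) ≠ 0 := Nat.cast_ne_zero.mpr (Nat.factorial_ne_zero _)
    have hfacm : ((m.factorial : ℝ)) ≠ 0 := Nat.cast_ne_zero.mpr (Nat.factorial_ne_zero _)
    have hfacN : (((N-1).factorial : ℝ)) ≠ 0 := Nat.cast_ne_zero.mpr (Nat.factorial_ne_zero _)
    have nid := Nat.choose_mul_factorial_mul_factorial (show N-1 ≤ (N-1)+x by omega)
    rw [show (N-1) + x - (N-1) = x from by omega] at nid
    have mid := Nat.choose_mul_factorial_mul_factorial hkm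
    have nid' := congrArg (fun z : ℕ => (z:ℝ)) nid
    have mid' := congrArg (fun z : ℕ => (z:ℝ)) mid
    push_cast at nid' mid'
    have ha : (m.choose k : ℝ) = m.factorial / (k.factorial * (m-k).factorial) := by
      rw [eq_div_iff (mul_ne_zero hk1 hmk)]
      linear_combination mid'
    have hb : (((N-1)+x).choose (N-1) : ℝ)
        = ((N-1)+x).factorial / ((N-1).factorial * x.factorial) := by
      rw [eq_div_iff (mul_ne_zero hfacN hxf)]
      linear_combination nid'
    have hD1 : (((m-k).factorial : ℝ)) * ((-1)^k * k.factorial) ≠ 0 :=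
      mul_ne_zero hmk (mul_ne_zero hs hk1)
    have hD2 : (((m-k).factorial : ℝ)) * k.factorial ≠ 0 := mul_ne_zero hmk hk1
    calc (((N-1)+x).factorial / x.factorial : ℝ) /
            (((m-k).factorial : ℝ) * ((-1)^k * k.factorial))
        = ((-1:ℝ)^k * (((N-1)+x).factorial / x.factorial)) /
            (((m-k).factorial : ℝ) * k.factorial) := by
          rw [div_eq_div_iff hD1 hD2]
          linear_combination (-((((N-1)+x).factorial / x.factorial : ℝ)
            * ((m-k).factorial : ℝ) * (k.factorial:ℝ))) * hsq
      _ = Gaux N m rn k := by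
          rw [Gaux, show N - 1 + rn - k = (N-1) + x from by omega, ha, hb]
          field_simp
  · -- vanishing case
    have hj : k - rn - 1 < N - 1 := by omega
    have ht : (l:ℝ) - (yj:ℝ) + 1 = -(((k - rn - 1 : ℕ)):ℝ) := by
      have h' : l - yj + 1 = -((k - rn - 1 : ℕ) : ℤ) := by omega
      have := congrArg (fun z : ℤ => (z:ℝ)) h'
      push_cast at this
      linarith
    rw [show (∏ s ∈ range (N-1), ((l:ℝ) - (yj:ℝ) + 1 + (s:ℕ)))
          = ∏ s ∈ range (N-1), (-(((k - rn - 1:ℕ)):ℝ) + (s:ℕ)) from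
        Finset.prod_congr rfl (fun s _ => by rw [ht]), prod_shift_zero _ _ hj]
    rw [Gaux, Nat.choose_eq_zero_of_lt (show N-1+rn-k < N-1 from by omega)]
    simp

/-- `h_r(1^n)`: the complete homogeneous symmetric function at `n` ones,
`h_r(1^n) = C(n+r-1, r)` for `r ≥ 0` and `0` for `r < 0`. -/
noncomputable def hOnes (n : ℕ) (r : ℤ) : ℝ :=
  if 0 ≤ r then (Nat.choose (n + r.toNat - 1) r.toNat : ℝ) else 0

/-- Proposition 3.2: with `0 ≤ n ≤ N-1`, `0 ≤ y - y_j ≤ N-1`,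
`y_1 ≥ y_j`, `y_1 - y_j ≤ N-1`, and `B := max(y+n, y_1+1) - N`,
`h_{y-y_j}(1^n) = (N-n)!/(N-1)! · ∑_{ℓ=B}^y (ℓ-y_j+1)_{N-1} / ∏_{i=y-N+n, i≠ℓ}^y (ℓ-i)`
(the sum of the residues of `(N-n)!/(N-1)! · (z-y_j+1)_{N-1}/(z-y)_{N-n+1}` at
`z = y, y-1, ..., B`; it is empty, hence `0`, if `B > y`). -/
theorem stmt_13 (N n : ℕ) (hN : 1 ≤ N) (hn : n ≤ N - 1)
    (y yj y1 : ℤ) (h0 : 0 ≤ y - yj) (h1 : y - yj ≤ (N : ℤ) - 1)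
    (h2 : yj ≤ y1) (h3 : y1 - yj ≤ (N : ℤ) - 1) :
    hOnes n (y - yj)
      = ((Nat.factorial (N - n) : ℝ) / (Nat.factorial (N - 1) : ℝ)) *
          ∑ l ∈ Finset.Icc (max (y + n) (y1 + 1) - N) y,
            (ascPochhammer ℝ (N - 1)).eval ((l : ℝ) - (yj : ℝ) + 1) /
              ∏ i ∈ (Finset.Icc (y - N + n) y).erase l, ((l : ℝ) - (i : ℝ)) := by
  have hnN : n < N := by omega
  rw [hOnes, if_pos h0]
  obtain ⟨m, hmdef⟩ : ∃ m, N - n = m := ⟨_, rfl⟩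
  obtain ⟨rn, hrdef⟩ : ∃ rn, (y - yj).toNat = rn := ⟨_, rfl⟩
  obtain ⟨B, hBdef⟩ : ∃ B : ℤ, max (y + (n:ℤ)) (y1 + 1) - (N:ℤ) = B := ⟨_, rfl⟩
  obtain ⟨K, hKdef⟩ : ∃ K, (y - B).toNat = K := ⟨_, rfl⟩
  rw [hmdef, hrdef, hBdef]
  have hm1 : 1 ≤ m := by omega
  have hmn : m + n = N := by omega
  have hr : y - yj = (rn:ℤ) := by omega
  have hBy : B ≤ y := by omega
  have hKm : K ≤ m := by omega
  have hKNr : K ≤ N - 1 + rn := by omega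
  have hKcase : K < rn → K = m := by omega
  have hfacm : ((m.factorial : ℝ)) ≠ 0 := Nat.cast_ne_zero.mpr (Nat.factorial_ne_zero m)
  have hfacN : (((N-1).factorial : ℝ)) ≠ 0 := Nat.cast_ne_zero.mpr (Nat.factorial_ne_zero _)
  -- Step 1 : reindex and evaluate each term
  have step1 : ∑ l ∈ Finset.Icc B y,
      (ascPochhammer ℝ (N - 1)).eval ((l : ℝ) - (yj : ℝ) + 1) /
        ∏ i ∈ (Finset.Icc (y - N + n) y).erase l, ((l : ℝ) - (i : ℝ))
      = ∑ k ∈ range (K+1), Gaux N m rn k := by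
    refine Finset.sum_nbij' (fun l : ℤ => (y - l).toNat) (fun k : ℕ => y - (k:ℤ)) ?_ ?_ ?_ ?_ ?_
    · intro l hl; simp only [Finset.mem_Icc] at hl; simp only [Finset.mem_range]; omega
    · intro k hk; simp only [Finset.mem_range] at hk; simp only [Finset.mem_Icc]; omega
    · intro l hl; simp only [Finset.mem_Icc] at hl
      show y - ((y - l).toNat : ℤ) = l
      omega
    · intro k hk; simp only [Finset.mem_range] at hk
      show ((y - (y - (k:ℤ))).toNat : ℕ) = k
      omega
    · intro l hl
      simp only [Finset.mem_Icc] at hl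
      exact term_eval N n m rn hnN hmdef.symm y yj l h0 hrdef.symm
        ((y - l).toNat) rfl (by omega) (by omega) (by omega)
  -- Step 2 : change summation range
  have step2 : ∑ k ∈ range (K+1), Gaux N m rn k = ∑ k ∈ range (rn+1), Gaux N m rn k := by
    have hGz : ∀ k, rn < k → k ≤ N - 1 + rn → Gaux N m rn k = 0 := by
      intro k hk hk2
      rw [Gaux, Nat.choose_eq_zero_of_lt (show N-1+rn-k < N-1 from by omega)]
      simp
    rcases le_or_gt rn K with h | h
    · refine (Finset.sum_subset (Finset.range_subset_range.mpr (by omega)) ?_).symm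
      intro k hk hk2
      simp only [Finset.mem_range] at hk hk2
      exact hGz k (by omega) (by omega)
    · refine Finset.sum_subset (Finset.range_subset_range.mpr (by omega)) ?_
      intro k hk hk2
      simp only [Finset.mem_range] at hk hk2
      rw [Gaux, Nat.choose_eq_zero_of_lt (show m < k from by omega)]
      simp
  -- Step 3 : apply the core identity
  have step3 : ∑ k ∈ range (rn+1), Gaux N m rn k
      = ((n + rn - 1).choose rn : ℝ) * ((N-1).factorial / m.factorial) := by
    have hc := congrArg (fun z : ℤ => (z:ℝ)) (core_id m n rn (by omega))
    push_cast at hc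
    rw [← hc, Finset.sum_mul]
    refine Finset.sum_congr rfl fun k hk => ?_
    simp only [Finset.mem_range] at hk
    rw [Gaux, show m+n-1+(rn-k) = N-1+rn-k from by omega, show m+n-1 = N-1 from by omega]
  rw [step1, step2, step3]
  rw [show ((m.factorial:ℝ)/((N-1).factorial:ℝ))
        * (((n + rn - 1).choose rn : ℝ) * (((N-1).factorial:ℝ)/(m.factorial:ℝ)))
      = ((n + rn - 1).choose rn : ℝ)
        * (((m.factorial:ℝ)/((N-1).factorial:ℝ)) * (((N-1).factorial:ℝ)/(m.factorial:ℝ)))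
      from by ring]
  rw [show ((m.factorial:ℝ)/((N-1).factorial:ℝ)) * (((N-1).factorial:ℝ)/(m.factorial:ℝ)) = 1
      from by field_simp, mul_one]
end

section
/- (Contour-splitting lemma) Let R be a rational function with all poles inside a contour Γ, let z be a point outside Γ which is not a pole of R, and let S(u_1,...,u_ℓ) be a symmetric polynomial. Then (∏_{α=1}^{ℓ} ∮_{Γ∪z} du_α R(u_α)/(2πi (u_α - z))) Δ_ℓ²(u) S(u) − (∏_{α=1}^{ℓ} ∮_{Γ} du_α R(u_α)/(2πi (u_α - z))) Δ_ℓ²(u) S(u) = ℓ · R(z) · (∏_{α=1}^{ℓ-1} ∮_{Γ} du_α R(u_α)(u_α - z)/(2πi)) Δ_{ℓ-1}²(u_1,...,u_{ℓ-1}) S(z, u_1, ..., u_{ℓ-1}). -/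
open Complex

/-- The `m`-fold iterated contour integral `∏_α ∮_{C(c,ρ)} du_α/(2πi)` of a function of
`m` complex variables. -/
noncomputable def iterCircle (c : ℂ) (ρ : ℝ) : (m : ℕ) → ((Fin m → ℂ) → ℂ) → ℂ
  | 0, g => g ![]
  | m + 1, g =>
      (2 * Real.pi * Complex.I)⁻¹ *
        ∮ u in C(c, ρ), iterCircle c ρ m fun v => g (Fin.cons u v)

section Aux
open Finset Metric MvPolynomial

noncomputable section PhiAux

variable {n : ℕ}

/-- Multilinear functional on monomials: apply `W a` to the exponent of variable `a`. -/
def phiW (W : Fin n → ℕ → ℂ) (Q : MvPolynomial (Fin n) ℂ) : ℂ :=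
  ∑ t ∈ Q.support, Q.coeff t * ∏ a, W a (t a)

theorem phiW_zero (W : Fin n → ℕ → ℂ) : phiW W 0 = 0 := by
  simp [phiW]

theorem phiW_add (W : Fin n → ℕ → ℂ) (P Q : MvPolynomial (Fin n) ℂ) :
    phiW W (P + Q) = phiW W P + phiW W Q := by
  classical
  have key : ∀ (U : Finset (Fin n →₀ ℕ)) (p : MvPolynomial (Fin n) ℂ), p.support ⊆ U →
      phiW W p = ∑ t ∈ U, p.coeff t * ∏ a, W a (t a) := by
    intro U p hU
    exact Finset.sum_subset hU (fun t _ ht => by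
      rw [MvPolynomial.notMem_support_iff.mp ht, zero_mul])
  rw [key (P.support ∪ Q.support ∪ (P+Q).support) (P+Q) (subset_union_right),
      key (P.support ∪ Q.support ∪ (P+Q).support) P
        (subset_union_left.trans subset_union_left),
      key (P.support ∪ Q.support ∪ (P+Q).support) Q
        (subset_union_right.trans subset_union_left),
      ← Finset.sum_add_distrib]
  refine Finset.sum_congr rfl fun t _ => ?_
  rw [MvPolynomial.coeff_add, add_mul]

theorem phiW_monomial (W : Fin n → ℕ → ℂ) (t : Fin n →₀ ℕ) (a : ℂ) :
    phiW W (MvPolynomial.monomial t a) = a * ∏ i, W i (t i) := by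
  classical
  rcases eq_or_ne a 0 with rfl | ha
  · simp [phiW, MvPolynomial.support_monomial]
  · simp [phiW, MvPolynomial.support_monomial, ha, MvPolynomial.coeff_monomial]

theorem phiW_neg (W : Fin n → ℕ → ℂ) (Q : MvPolynomial (Fin n) ℂ) :
    phiW W (-Q) = - phiW W Q := by
  simp [phiW, MvPolynomial.support_neg, MvPolynomial.coeff_neg, Finset.sum_neg_distrib]

theorem phiW_sub (W : Fin n → ℕ → ℂ) (P Q : MvPolynomial (Fin n) ℂ) :
    phiW W (P - Q) = phiW W P - phiW W Q := by
  rw [sub_eq_add_neg, phiW_add, phiW_neg, sub_eq_add_neg]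

/-- If `W i` is geometric with ratio `z`, multiplying by `X i` multiplies `phiW` by `z`. -/
theorem phiW_X_mul (W : Fin n → ℕ → ℂ) (i : Fin n) (z : ℂ)
    (hWi : ∀ k, W i k = z ^ k) (Q : MvPolynomial (Fin n) ℂ) :
    phiW W (MvPolynomial.X i * Q) = z * phiW W Q := by
  classical
  induction Q using MvPolynomial.induction_on' with
  | monomial t a =>
    rw [MvPolynomial.X, MvPolynomial.monomial_mul, one_mul, phiW_monomial, phiW_monomial]
    have h1 : ∀ b : Fin n,
        W b ((Finsupp.single i 1 + t : Fin n →₀ ℕ) b) = (if b = i then z else 1) * W b (t b) := by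
      intro b
      rcases eq_or_ne b i with rfl | hb
      · simp [Finsupp.add_apply, Finsupp.single_apply, hWi, pow_add]
      · simp [Finsupp.add_apply, Finsupp.single_apply, Ne.symm hb, hb]
    rw [Finset.prod_congr rfl (fun b _ => h1 b), Finset.prod_mul_distrib,
      Finset.prod_ite_eq' Finset.univ i (fun _ => z), if_pos (Finset.mem_univ i)]
    ring
  | add p q hp hq =>
    rw [mul_add, phiW_add, phiW_add, hp, hq, mul_add]

theorem phiW_rename (W : Fin n → ℕ → ℂ) (σ : Equiv.Perm (Fin n))
    (Q : MvPolynomial (Fin n) ℂ) :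
    phiW W (MvPolynomial.rename σ Q) = phiW (fun b => W (σ b)) Q := by
  classical
  induction Q using MvPolynomial.induction_on' with
  | monomial t a =>
    rw [MvPolynomial.rename_monomial, phiW_monomial, phiW_monomial]
    congr 1
    rw [← Equiv.prod_comp σ (fun b => W b ((Finsupp.mapDomain σ t) b))]
    refine Finset.prod_congr rfl fun b _ => ?_
    rw [Finsupp.mapDomain_equiv_apply, Equiv.symm_apply_apply]
  | add p q hp hq =>
    rw [map_add, phiW_add, phiW_add, hp, hq]

/-- Substituting `z` for the first variable corresponds to `Fin.cons` on the weights. -/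
theorem phiW_sub0 (B : ℕ → ℂ) (z : ℂ) (Q : MvPolynomial (Fin (n+1)) ℂ) :
    phiW (fun _ => B) (MvPolynomial.aeval
        (Fin.cons (MvPolynomial.C z) MvPolynomial.X : Fin (n+1) → MvPolynomial (Fin n) ℂ) Q)
      = phiW (Fin.cons (fun k => z ^ k) (fun _ => B)) Q := by
  classical
  induction Q using MvPolynomial.induction_on' with
  | monomial t a =>
    have ht' : (MvPolynomial.aeval
        (Fin.cons (MvPolynomial.C z) MvPolynomial.X : Fin (n+1) → MvPolynomial (Fin n) ℂ))
        (MvPolynomial.monomial t a)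
        = MvPolynomial.monomial (Finsupp.equivFunOnFinite.symm (fun i => t i.succ))
            (a * z ^ t 0) := by
      rw [MvPolynomial.aeval_monomial, MvPolynomial.monomial_eq]
      rw [Finsupp.prod_fintype _ _ (fun i => pow_zero _),
          Finsupp.prod_fintype _ _ (fun i => pow_zero _)]
      rw [Fin.prod_univ_succ]
      simp only [Fin.cons_zero, Fin.cons_succ, Finsupp.coe_equivFunOnFinite_symm]
      rw [map_mul, map_pow, MvPolynomial.algebraMap_eq]
      ring
    rw [ht', phiW_monomial, phiW_monomial, Fin.prod_univ_succ]
    simp only [Fin.cons_zero, Fin.cons_succ, Finsupp.coe_equivFunOnFinite_symm]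
    ring
  | add p q hp hq =>
    rw [map_add, phiW_add, phiW_add, hp, hq]

end PhiAux


theorem CircleIntegrable.const_mul' {f : ℂ → ℂ} {c : ℂ} {R : ℝ}
    (hf : CircleIntegrable f c R) (a : ℂ) : CircleIntegrable (fun w => a * f w) c R :=
  IntervalIntegrable.const_mul hf a

theorem circleIntegral_finset_sum {ι : Type*} (F : Finset ι) (f : ι → ℂ → ℂ) (c : ℂ) (R : ℝ)
    (h : ∀ s ∈ F, CircleIntegrable (f s) c R) :
    (∮ z in C(c, R), ∑ s ∈ F, f s z) = ∑ s ∈ F, ∮ z in C(c, R), f s z := by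
  simp only [circleIntegral, smul_eq_mul, Finset.mul_sum]
  exact intervalIntegral.integral_finset_sum fun s hs => by
    simpa only [smul_eq_mul] using (h s hs).out

theorem iterCircle_congr {c : ℂ} {ρ : ℝ} (hρ : 0 ≤ ρ) :
    ∀ (n : ℕ) (f g : (Fin n → ℂ) → ℂ),
      (∀ v : Fin n → ℂ, (∀ i, v i ∈ sphere c ρ) → f v = g v) →
      iterCircle c ρ n f = iterCircle c ρ n g
  | 0, f, g, h => h ![] (fun i => i.elim0)
  | n + 1, f, g, h => by
    show (2 * Real.pi * Complex.I)⁻¹ * _ = (2 * Real.pi * Complex.I)⁻¹ * _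
    congr 1
    refine circleIntegral.integral_congr hρ fun u hu => ?_
    exact iterCircle_congr hρ n _ _ fun v hv =>
      h (Fin.cons u v) (fun i => i.cases hu hv)

/-- Key separation lemma: the iterated contour integral of a finite sum of product-form
functions is the corresponding sum of products of one-dimensional contour integrals. -/
theorem iterCircle_succ (c : ℂ) (ρ : ℝ) (n : ℕ) (g : (Fin (n+1) → ℂ) → ℂ) :
    iterCircle c ρ (n+1) g = (2 * Real.pi * Complex.I)⁻¹ *
        (∮ u in C(c, ρ), iterCircle c ρ n fun v : Fin n → ℂ => g (Fin.cons u v)) := by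
  simp only [iterCircle]

theorem iterCircle_sep {ι : Type*} (c : ℂ) (ρ : ℝ) (h : ℂ → ℂ)
    (hint : ∀ k : ℕ, CircleIntegrable (fun w => w ^ k * h w) c ρ) :
    ∀ (n : ℕ) (F : Finset ι) (co : ι → ℂ) (ex : ι → Fin n → ℕ),
      iterCircle c ρ n (fun v => ∑ s ∈ F, co s * ∏ i, ((v i) ^ (ex s i) * h (v i)))
        = ∑ s ∈ F, co s *
            ∏ i, ((2 * Real.pi * Complex.I)⁻¹ * ∮ w in C(c, ρ), w ^ (ex s i) * h w) := by
  intro n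
  induction n with
  | zero => intro F co ex; simp [iterCircle]
  | succ n iterCircle_sep' =>
    intro F co ex
    rw [iterCircle_succ]
    have step1 : ∀ u : ℂ, (fun v : Fin n → ℂ =>
          ∑ s ∈ F, co s * ∏ i : Fin (n+1), (((Fin.cons u v : Fin (n+1) → ℂ) i) ^ (ex s i) * h ((Fin.cons u v : Fin (n+1) → ℂ) i)))
        = fun v => ∑ s ∈ F, (co s * (u ^ (ex s 0) * h u)) *
            ∏ i : Fin n, ((v i) ^ (ex s i.succ) * h (v i)) := by
      intro u
      funext v
      refine Finset.sum_congr rfl fun s _ => ?_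
      rw [Fin.prod_univ_succ]
      simp only [Fin.cons_zero, Fin.cons_succ]
      ring
    have step2 : ∀ u : ℂ, iterCircle c ρ n (fun v : Fin n → ℂ =>
          ∑ s ∈ F, co s * ∏ i : Fin (n+1), (((Fin.cons u v : Fin (n+1) → ℂ) i) ^ (ex s i) * h ((Fin.cons u v : Fin (n+1) → ℂ) i)))
        = ∑ s ∈ F, (co s * (u ^ (ex s 0) * h u)) *
            ∏ i : Fin n, ((2 * Real.pi * Complex.I)⁻¹ *
              ∮ w in C(c, ρ), w ^ (ex s i.succ) * h w) := by
      intro u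
      rw [step1 u]
      exact iterCircle_sep' F
        (fun s => co s * (u ^ (ex s 0) * h u)) (fun s i => ex s i.succ)
    rw [show (∮ u in C(c, ρ), iterCircle c ρ n fun v =>
          ∑ s ∈ F, co s * ∏ i : Fin (n+1), (((Fin.cons u v : Fin (n+1) → ℂ) i) ^ (ex s i) * h ((Fin.cons u v : Fin (n+1) → ℂ) i)))
        = ∮ u in C(c, ρ), ∑ s ∈ F,
            (co s * ∏ i : Fin n, ((2 * Real.pi * Complex.I)⁻¹ *
              ∮ w in C(c, ρ), w ^ (ex s i.succ) * h w)) * (u ^ (ex s 0) * h u) from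
      congrArg (fun f => circleIntegral f c ρ) (funext fun u => by
        rw [step2 u]; exact Finset.sum_congr rfl fun s _ => by ring)]
    · rw [circleIntegral_finset_sum F _ c ρ
        (fun s _ => ((hint (ex s 0)).const_mul' _))]
      rw [Finset.mul_sum]
      refine Finset.sum_congr rfl fun s _ => ?_
      rw [show (∮ u in C(c, ρ), (co s * ∏ i : Fin n, ((2 * Real.pi * Complex.I)⁻¹ *
              ∮ w in C(c, ρ), w ^ (ex s i.succ) * h w)) * (u ^ (ex s 0) * h u))
          = (co s * ∏ i : Fin n, ((2 * Real.pi * Complex.I)⁻¹ *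
              ∮ w in C(c, ρ), w ^ (ex s i.succ) * h w)) *
            ∮ u in C(c, ρ), u ^ (ex s 0) * h u from by
        exact circleIntegral.integral_const_mul
          (co s * ∏ i : Fin n, ((2 * Real.pi * Complex.I)⁻¹ *
              ∮ w in C(c, ρ), w ^ (ex s i.succ) * h w)) _ c ρ]
      rw [Fin.prod_univ_succ]
      ring

theorem circleIntegral_add' {f g : ℂ → ℂ} {c : ℂ} {R : ℝ} (hf : CircleIntegrable f c R)
    (hg : CircleIntegrable g c R) :
    (∮ z in C(c, R), (f z + g z)) = (∮ z in C(c, R), f z) + ∮ z in C(c, R), g z := by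
  simp only [circleIntegral, smul_add, intervalIntegral.integral_add hf.out hg.out]

theorem residue_step (R : ℂ → ℂ) (P : Finset ℂ) (c z : ℂ) (ρ ρ' : ℝ)
    (hρ : 0 < ρ) (hρρ' : ρ < ρ')
    (hP : ∀ p ∈ P, ‖p - c‖ < ρ)
    (hR : DifferentiableOn ℂ R ((P : Set ℂ))ᶜ)
    (hz1 : ρ < ‖z - c‖) (hz2 : ‖z - c‖ < ρ') (k : ℕ) :
    (2 * Real.pi * Complex.I)⁻¹ * (∮ w in C(c, ρ'), w ^ k * (R w / (w - z)))
      = (2 * Real.pi * Complex.I)⁻¹ * (∮ w in C(c, ρ), w ^ k * (R w / (w - z)))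
        + z ^ k * R z := by
  have hρ' : (0:ℝ) < ρ' := hρ.trans hρρ'
  have hPo : IsOpen ((P : Set ℂ))ᶜ := (P.finite_toSet.isClosed).isOpen_compl
  set F : ℂ → ℂ := fun w => w ^ k * R w with hF
  have hFd : ∀ w ∈ ((P : Set ℂ))ᶜ, DifferentiableAt ℂ F w := by
    intro w hw
    exact (differentiableAt_pow k).mul ((hR w hw).differentiableAt (hPo.mem_nhds hw))
  have hannP : ∀ w : ℂ, ρ ≤ ‖w - c‖ → w ∈ ((P : Set ℂ))ᶜ := by
    intro w hw hwP
    exact absurd (hP w hwP) (not_lt.2 hw)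
  have hzP : z ∈ ((P : Set ℂ))ᶜ := hannP z hz1.le
  set g : ℂ → ℂ := dslope F z with hg
  have hgc : ∀ w : ℂ, ρ ≤ ‖w - c‖ → ContinuousAt g w := by
    intro w hw
    rcases eq_or_ne w z with rfl | hwz
    · exact continuousAt_dslope_same.2 (hFd w (hannP w hw))
    · exact (continuousAt_dslope_of_ne hwz).2 (hFd w (hannP w hw)).continuousAt
  have hgd : ∀ w : ℂ, ρ ≤ ‖w - c‖ → w ≠ z → DifferentiableAt ℂ g w := by
    intro w hw hwz
    exact (differentiableAt_dslope_of_ne hwz).2 (hFd w (hannP w hw))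
  have key : ∀ w : ℂ, w ≠ z → w ^ k * (R w / (w - z)) = g w + F z * (w - z)⁻¹ := by
    intro w hw
    rw [hg, dslope_of_ne F hw, slope_def_field, hF]
    have h1 : w - z ≠ 0 := sub_ne_zero.mpr hw
    field_simp
    ring
  have habs : ∀ {r : ℝ} {w : ℂ}, w ∈ sphere c r → ‖w - c‖ = r := by
    intro r w hw
    rw [mem_sphere, Complex.dist_eq] at hw
    exact hw
  have hsz : ∀ w ∈ sphere c ρ, w ≠ z := fun w hw h => by
    rw [h] at hw; exact absurd (habs hw) (ne_of_gt hz1)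
  have hsz' : ∀ w ∈ sphere c ρ', w ≠ z := fun w hw h => by
    rw [h] at hw; exact absurd (habs hw) (ne_of_lt hz2)
  have hgi : CircleIntegrable g c ρ := ContinuousOn.circleIntegrable hρ.le
    (fun w hw => (hgc w (habs hw).ge).continuousWithinAt)
  have hgi' : CircleIntegrable g c ρ' := ContinuousOn.circleIntegrable hρ'.le
    (fun w hw => (hgc w (by rw [habs hw]; exact hρρ'.le)).continuousWithinAt)
  have hii : ∀ r : ℝ, 0 ≤ r → (∀ w ∈ sphere c r, w ≠ z) →
      CircleIntegrable (fun w => F z * (w - z)⁻¹) c r := by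
    intro r hr hrz
    refine ContinuousOn.circleIntegrable hr (continuousOn_const.mul ?_)
    intro w hw
    exact ((continuousAt_id.sub continuousAt_const).inv₀ (sub_ne_zero.mpr (hrz w hw))).continuousWithinAt
  have split : ∀ r : ℝ, 0 ≤ r → (∀ w ∈ sphere c r, w ≠ z) → CircleIntegrable g c r →
      (∮ w in C(c, r), w ^ k * (R w / (w - z)))
        = (∮ w in C(c, r), g w) + F z * (∮ w in C(c, r), (w - z)⁻¹) := by
    intro r hr hrz hgint
    rw [circleIntegral.integral_congr hr
        (fun w hw => key w (hrz w hw)),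
      circleIntegral_add' hgint (hii r hr hrz)]
    congr 1
    exact circleIntegral.integral_const_mul (F z) _ c r
  have hann : (∮ w in C(c, ρ'), g w) = ∮ w in C(c, ρ), g w := by
    refine circleIntegral_eq_of_differentiable_on_annulus_off_countable hρ hρρ'.le
      (Set.countable_singleton z) (fun w hw => ?_) (fun w hw => ?_)
    · rcases hw with ⟨_, hw2⟩
      rw [mem_ball, Complex.dist_eq, not_lt] at hw2
      exact (hgc w hw2).continuousWithinAt
    · rcases hw with ⟨⟨_, hw2⟩, hw3⟩
      rw [mem_closedBall, Complex.dist_eq, not_le] at hw2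
      exact hgd w hw2.le (by simpa using hw3)
  have hzero : (∮ w in C(c, ρ), (w - z)⁻¹) = 0 := by
    refine Complex.circleIntegral_eq_zero_of_differentiable_on_off_countable hρ.le
      Set.countable_empty (fun w hw => ?_) (fun w hw => ?_)
    · rw [mem_closedBall, Complex.dist_eq] at hw
      refine ((continuousAt_id.sub continuousAt_const).inv₀ (sub_ne_zero.mpr ?_)).continuousWithinAt
      intro h; simp only [id_eq] at h; rw [h] at hw; exact absurd hw (not_le.2 hz1)
    · rw [Set.diff_empty, mem_ball, Complex.dist_eq] at hw
      refine DifferentiableAt.inv ((differentiableAt_id.sub_const z)) (sub_ne_zero.mpr ?_)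
      intro h; rw [h] at hw; exact absurd hw (not_lt.2 hz1.le)
  have htpi : (∮ w in C(c, ρ'), (w - z)⁻¹) = 2 * Real.pi * Complex.I :=
    circleIntegral.integral_sub_inv_of_mem_ball (by rw [mem_ball, Complex.dist_eq]; exact hz2)
  have hne : (2 * (Real.pi : ℂ) * Complex.I) ≠ 0 := by
    simp [Real.pi_ne_zero, Complex.I_ne_zero]
  rw [split ρ' hρ'.le hsz' hgi', split ρ hρ.le hsz hgi, hann, hzero, htpi, hF]
  field_simp
  ring

-- eval ∘ aeval(cons (C z) X) = eval at (cons z v)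
theorem eval_aeval_cons {m : ℕ} (z : ℂ) (v : Fin m → ℂ) (T : MvPolynomial (Fin (m+1)) ℂ) :
    eval v (aeval (Fin.cons (C z) X : Fin (m+1) → MvPolynomial (Fin m) ℂ) T)
      = eval (Fin.cons z v) T := by
  rw [aeval_eq_eval₂Hom, coe_eval₂Hom, eval_eval₂]
  have h1 : ((eval v).comp (algebraMap ℂ (MvPolynomial (Fin m) ℂ))) = RingHom.id ℂ :=
    RingHom.ext fun a => by simp [MvPolynomial.algebraMap_eq]
  rw [h1]
  have h2 : (fun s : Fin (m+1) => eval v ((Fin.cons (C z) X : Fin (m+1) → _) s))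
      = Fin.cons z v := by
    funext i
    refine Fin.cases ?_ (fun j => ?_) i <;> simp
  rw [h2]
  rfl

theorem vand_sq_det {l : ℕ} (y : Fin l → ℂ) :
    (∏ i, ∏ j ∈ Ioi i, (y i - y j)) ^ 2 = (Matrix.vandermonde y).det ^ 2 := by
  rw [Matrix.det_vandermonde]
  have h1 : (∏ i, ∏ j ∈ Ioi i, (y i - y j))
      = (∏ i : Fin l, ∏ j ∈ Ioi i, (-1 : ℂ)) * ∏ i, ∏ j ∈ Ioi i, (y j - y i) := by
    rw [← Finset.prod_mul_distrib]
    refine Finset.prod_congr rfl fun i _ => ?_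
    rw [← Finset.prod_mul_distrib]
    exact Finset.prod_congr rfl fun j _ => by ring
  have h2 : ((∏ i : Fin l, ∏ j ∈ Ioi i, (-1 : ℂ))) ^ 2 = 1 := by
    rw [← Finset.prod_pow]
    have : ∀ i : Fin l, (∏ j ∈ Ioi i, (-1 : ℂ)) ^ 2 = 1 := by
      intro i
      rw [← Finset.prod_pow]
      simp
    rw [Finset.prod_congr rfl fun i _ => this i]
    simp
  rw [h1, mul_pow, h2, one_mul]

theorem vand_sq_perm {l : ℕ} (σ : Equiv.Perm (Fin l)) (x : Fin l → ℂ) :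
    (∏ i, ∏ j ∈ Ioi i, (x (σ i) - x (σ j))) ^ 2
      = (∏ i, ∏ j ∈ Ioi i, (x i - x j)) ^ 2 := by
  have h0 : (fun i => x (σ i)) = x ∘ σ := rfl
  rw [vand_sq_det (fun i => x (σ i)), vand_sq_det x]
  have h1 : Matrix.vandermonde (fun i => x (σ i)) = (Matrix.vandermonde x).submatrix σ id := by
    ext i j
    simp [Matrix.vandermonde_apply]
  rw [h1, Matrix.det_permute]
  rcases Int.units_eq_one_or (Equiv.Perm.sign σ) with h | h <;> simp [h]

open Finset Metric MvPolynomial in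
theorem iterCircle_eval {c : ℂ} {ρ : ℝ} (h : ℂ → ℂ)
    (hint : ∀ k : ℕ, CircleIntegrable (fun w => w ^ k * h w) c ρ)
    (n : ℕ) (Q : MvPolynomial (Fin n) ℂ) :
    iterCircle c ρ n (fun v => MvPolynomial.eval v Q * ∏ a, h (v a))
      = phiW (fun _ k => (2 * Real.pi * Complex.I)⁻¹ * ∮ w in C(c, ρ), w ^ k * h w) Q := by
  rw [show (fun v : Fin n → ℂ => MvPolynomial.eval v Q * ∏ a, h (v a))
      = fun v => ∑ t ∈ Q.support, Q.coeff t * ∏ a, ((v a) ^ (t a) * h (v a)) from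
    funext fun v => by
      rw [MvPolynomial.eval_eq', Finset.sum_mul]
      exact Finset.sum_congr rfl fun t _ => by
        rw [Finset.prod_mul_distrib, mul_assoc]]
  exact iterCircle_sep c ρ h hint n Q.support (fun t => Q.coeff t) (fun t a => t a)


end Aux

section Main
open Finset Metric MvPolynomial

/-- contour-splitting, Lemma 8.2: let `R` be holomorphic away from a finite
set `P` of poles inside the circle `Γ = C(c,ρ)`, let `z` lie outside `Γ` (but inside the
deformed contour `Γ ∪ z = C(c,ρ')`) and not be a pole of `R`, and let `S` be a symmetric
polynomial in `ℓ = m+1` variables.  Then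
`(∏_{α=1}^ℓ ∮_{Γ∪z}) Δ_ℓ²S·∏ R(u_α)/(u_α-z) − (∏_{α=1}^ℓ ∮_Γ) Δ_ℓ²S·∏ R(u_α)/(u_α-z)
 = ℓ·R(z)·(∏_{α=1}^{ℓ-1} ∮_Γ) Δ_{ℓ-1}²·S(z,·)·∏ R(u_α)(u_α-z)`. -/
theorem stmt_16 (m : ℕ) (R : ℂ → ℂ) (P : Finset ℂ) (c z : ℂ) (ρ ρ' : ℝ)
    (hρ : 0 < ρ) (hρρ' : ρ < ρ')
    (hP : ∀ p ∈ P, ‖p - c‖ < ρ)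
    (hR : DifferentiableOn ℂ R ((P : Set ℂ))ᶜ)
    (hz1 : ρ < ‖z - c‖) (hz2 : ‖z - c‖ < ρ')
    (hzP : z ∉ P)
    (S : MvPolynomial (Fin (m + 1)) ℂ) (hS : S.IsSymmetric) :
    iterCircle c ρ' (m + 1)
        (fun u => (∏ a, R (u a) / (u a - z)) *
          (∏ i : Fin (m + 1), ∏ j ∈ Finset.Ioi i, (u i - u j)) ^ 2 *
          MvPolynomial.eval u S)
      - iterCircle c ρ (m + 1)
          (fun u => (∏ a, R (u a) / (u a - z)) *
            (∏ i : Fin (m + 1), ∏ j ∈ Finset.Ioi i, (u i - u j)) ^ 2 *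
            MvPolynomial.eval u S)
      = ((m : ℂ) + 1) * R z *
          iterCircle c ρ m
            (fun v => (∏ a, R (v a) * (v a - z)) *
              (∏ i : Fin m, ∏ j ∈ Finset.Ioi i, (v i - v j)) ^ 2 *
              MvPolynomial.eval (Fin.cons z v) S) := by
  classical
  have hρ0 : (0:ℝ) ≤ ρ := hρ.le
  have hρ'0 : (0:ℝ) ≤ ρ' := (hρ.trans hρρ').le
  -- the big symmetric polynomial
  set Δp : MvPolynomial (Fin (m+1)) ℂ :=
    ∏ i : Fin (m+1), ∏ j ∈ Finset.Ioi i, (X i - X j) with hΔp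
  set T : MvPolynomial (Fin (m+1)) ℂ := Δp ^ 2 * S with hT
  have hevalT : ∀ x : Fin (m+1) → ℂ, MvPolynomial.eval x T
      = (∏ i : Fin (m+1), ∏ j ∈ Finset.Ioi i, (x i - x j)) ^ 2 * MvPolynomial.eval x S := by
    intro x
    rw [hT, map_mul, map_pow, hΔp, map_prod]
    congr 2
    refine Finset.prod_congr rfl fun i _ => ?_
    rw [map_prod]
    exact Finset.prod_congr rfl fun j _ => by rw [map_sub, eval_X, eval_X]
  -- integrability of the kernels
  have hPo : IsOpen ((P : Set ℂ))ᶜ := (P.finite_toSet.isClosed).isOpen_compl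
  have hint : ∀ r : ℝ, ρ ≤ r → r ≠ ‖z - c‖ → ∀ k : ℕ,
      CircleIntegrable (fun w => w ^ k * (R w / (w - z))) c r := by
    intro r hr hrz k
    refine ContinuousOn.circleIntegrable (hρ0.trans hr) ?_
    intro w hw
    have habs : ‖w - c‖ = r := by
      rw [mem_sphere, Complex.dist_eq] at hw; exact hw
    have hwP : w ∈ ((P : Set ℂ))ᶜ := by
      intro hmem
      exact absurd (hP w hmem) (not_lt.2 (habs.symm ▸ hr))
    have hwz : w - z ≠ 0 := sub_ne_zero.mpr (fun h => hrz (by rw [← habs, h]))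
    have hRc : ContinuousAt R w :=
      ((hR w hwP).differentiableAt (hPo.mem_nhds hwP)).continuousAt
    exact (((continuous_pow k).continuousAt).mul
      (hRc.div (continuousAt_id.sub continuousAt_const) hwz)).continuousWithinAt
  -- the one-dimensional integrals
  set Bf : ℕ → ℂ := fun k =>
    (2 * Real.pi * Complex.I)⁻¹ * ∮ w in C(c, ρ), w ^ k * (R w / (w - z)) with hBf
  set Af : ℕ → ℂ := fun k =>
    (2 * Real.pi * Complex.I)⁻¹ * ∮ w in C(c, ρ'), w ^ k * (R w / (w - z)) with hAf
  have hAB : ∀ k, Af k = Bf k + z ^ k * R z := fun k =>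
    residue_step R P c z ρ ρ' hρ hρρ' hP hR hz1 hz2 k
  -- convert the two `(m+1)`-fold integrals
  have hfun : (fun u : Fin (m+1) → ℂ => (∏ a, R (u a) / (u a - z)) *
          (∏ i : Fin (m + 1), ∏ j ∈ Finset.Ioi i, (u i - u j)) ^ 2 *
          MvPolynomial.eval u S)
      = fun u => MvPolynomial.eval u T * ∏ a, R (u a) / (u a - z) :=
    funext fun u => by rw [hevalT u]; ring
  have e1 : iterCircle c ρ' (m + 1)
        (fun u => (∏ a, R (u a) / (u a - z)) *
          (∏ i : Fin (m + 1), ∏ j ∈ Finset.Ioi i, (u i - u j)) ^ 2 *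
          MvPolynomial.eval u S) = phiW (fun _ => Af) T := by
    rw [hfun]
    exact iterCircle_eval (fun w => R w / (w - z))
      (hint ρ' hρρ'.le (ne_of_gt hz2)) (m+1) T
  have e2 : iterCircle c ρ (m + 1)
        (fun u => (∏ a, R (u a) / (u a - z)) *
          (∏ i : Fin (m + 1), ∏ j ∈ Finset.Ioi i, (u i - u j)) ^ 2 *
          MvPolynomial.eval u S) = phiW (fun _ => Bf) T := by
    rw [hfun]
    exact iterCircle_eval (fun w => R w / (w - z))
      (hint ρ le_rfl (ne_of_lt hz1)) (m+1) T
  -- convert the `m`-fold integral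
  set T' : MvPolynomial (Fin m) ℂ :=
    aeval (Fin.cons (C z) X : Fin (m+1) → MvPolynomial (Fin m) ℂ) T with hT'
  have e3 : iterCircle c ρ m
        (fun v => (∏ a, R (v a) * (v a - z)) *
          (∏ i : Fin m, ∏ j ∈ Finset.Ioi i, (v i - v j)) ^ 2 *
          MvPolynomial.eval (Fin.cons z v) S)
      = iterCircle c ρ m (fun v => MvPolynomial.eval v T' * ∏ a, R (v a) / (v a - z)) := by
    refine iterCircle_congr hρ0 m _ _ fun v hv => ?_
    have hvz : ∀ i, v i ≠ z := by
      intro i h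
      have := hv i
      rw [mem_sphere, Complex.dist_eq, h] at this
      exact absurd this.symm (ne_of_lt hz1)
    rw [hT', eval_aeval_cons, hevalT]
    have hsplit : (∏ i : Fin (m+1), ∏ j ∈ Finset.Ioi i,
          ((Fin.cons z v : Fin (m+1) → ℂ) i - (Fin.cons z v : Fin (m+1) → ℂ) j))
        = (∏ a : Fin m, (z - v a)) * ∏ i : Fin m, ∏ j ∈ Finset.Ioi i, (v i - v j) := by
      rw [Fin.prod_univ_succ]
      congr 1
      · rw [Fin.prod_Ioi_zero]
        exact Finset.prod_congr rfl fun j _ => by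
          rw [Fin.cons_zero, Fin.cons_succ]
      · refine Finset.prod_congr rfl fun i _ => ?_
        rw [Fin.prod_Ioi_succ]
        exact Finset.prod_congr rfl fun j _ => by
          rw [Fin.cons_succ, Fin.cons_succ]
    rw [hsplit]
    have hprod : (∏ a : Fin m, (R (v a) * (v a - z)))
        = (∏ a : Fin m, (z - v a)) ^ 2 * ∏ a, R (v a) / (v a - z) := by
      rw [← Finset.prod_pow, ← Finset.prod_mul_distrib]
      refine Finset.prod_congr rfl fun a _ => ?_
      have h1 : v a - z ≠ 0 := sub_ne_zero.mpr (hvz a)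
      field_simp
      ring
    rw [hprod]
    ring
  have e4 : iterCircle c ρ m (fun v => MvPolynomial.eval v T' * ∏ a, R (v a) / (v a - z))
      = phiW (fun _ => Bf) T' :=
    iterCircle_eval (fun w => R w / (w - z)) (hint ρ le_rfl (ne_of_lt hz1)) m T'
  have e5 : phiW (fun _ => Bf) T' = phiW (Fin.cons (fun k => z ^ k) (fun _ => Bf)) T :=
    phiW_sub0 Bf z T
  rw [e1, e2, e3, e4, e5]
  -- now pure algebra
  set W : Finset (Fin (m+1)) → Fin (m+1) → ℕ → ℂ :=
    fun E a k => if a ∈ E then z ^ k else Bf k with hW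
  have hWprod : ∀ (E : Finset (Fin (m+1))) (t : Fin (m+1) →₀ ℕ),
      (∏ a, W E a (t a)) = (∏ a ∈ E, z ^ t a) * ∏ a ∈ Finset.univ \ E, Bf (t a) := by
    intro E t
    rw [show (∏ a, W E a (t a))
        = ∏ a, E.piecewise (fun a => z ^ t a) (fun a => Bf (t a)) a from
      Finset.prod_congr rfl fun a _ => by simp [hW, Finset.piecewise]]
    rw [Finset.prod_piecewise, Finset.univ_inter]
  have claim0 : phiW (fun _ => Af) T
      = ∑ E ∈ Finset.univ.powerset, (R z) ^ E.card * phiW (W E) T := by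
    simp only [phiW]
    have hsum : ∀ t : Fin (m+1) →₀ ℕ, (∏ a, Af (t a))
        = ∑ E ∈ Finset.univ.powerset,
            ((R z) ^ E.card * ((∏ a ∈ E, z ^ t a) * ∏ a ∈ Finset.univ \ E, Bf (t a))) := by
      intro t
      rw [Finset.prod_congr rfl fun a _ => hAB (t a),
        Finset.prod_congr rfl fun (a : Fin (m+1)) _ =>
          add_comm (Bf (t a)) (z ^ t a * R z),
        Finset.prod_add]
      refine Finset.sum_congr rfl fun E _ => ?_
      rw [Finset.prod_mul_distrib, Finset.prod_const]
      ring
    rw [Finset.sum_congr rfl fun t _ => by rw [hsum t, Finset.mul_sum]]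
    rw [Finset.sum_comm]
    refine Finset.sum_congr rfl fun E _ => ?_
    rw [Finset.mul_sum]
    refine Finset.sum_congr rfl fun t _ => ?_
    rw [hWprod E t]
    ring
  have hWempty : W ∅ = fun _ => Bf := by
    funext a k
    simp [hW]
  have hgeom : ∀ (E : Finset (Fin (m+1))) (a) (_ : a ∈ E) (k : ℕ), W E a k = z ^ k :=
    fun E a ha k => by simp [hW, ha]
  have hzero2 : ∀ E : Finset (Fin (m+1)), 2 ≤ E.card → phiW (W E) T = 0 := by
    intro E hE
    obtain ⟨i, hi, j, hj, hij⟩ := Finset.one_lt_card.mp hE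
    have key : ∀ i' j' : Fin (m+1), i' < j' → i' ∈ E → j' ∈ E → phiW (W E) T = 0 := by
      intro i' j' hlt hi' hj'
      have h1 : (X i' - X j' : MvPolynomial (Fin (m+1)) ℂ)
          ∣ ∏ j ∈ Finset.Ioi i', (X i' - X j : MvPolynomial (Fin (m+1)) ℂ) :=
        Finset.dvd_prod_of_mem (fun j => (X i' - X j : MvPolynomial (Fin (m+1)) ℂ))
          (Finset.mem_Ioi.mpr hlt)
      have h1' : (∏ j ∈ Finset.Ioi i', (X i' - X j : MvPolynomial (Fin (m+1)) ℂ)) ∣ Δp := by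
        rw [hΔp]
        exact Finset.dvd_prod_of_mem
          (fun i => ∏ j ∈ Finset.Ioi i, (X i - X j : MvPolynomial (Fin (m+1)) ℂ))
          (Finset.mem_univ i')
      have h1 : (X i' - X j' : MvPolynomial (Fin (m+1)) ℂ) ∣ Δp := h1.trans h1'
      have hdvd : (X i' - X j' : MvPolynomial (Fin (m+1)) ℂ) ∣ T := by
        rw [hT]
        exact (h1.trans (dvd_pow_self Δp two_ne_zero)).trans (dvd_mul_right _ S)
      obtain ⟨Q, hQ⟩ := hdvd
      rw [hQ, sub_mul, phiW_sub, phiW_X_mul (W E) i' z (hgeom E i' hi'),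
        phiW_X_mul (W E) j' z (hgeom E j' hj'), sub_self]
    rcases lt_or_gt_of_ne hij with hlt | hgt
    · exact key i j hlt hi hj
    · exact key j i hgt hj hi
  have hTsym : ∀ α : Fin (m+1), MvPolynomial.rename ⇑(Equiv.swap 0 α) T = T := by
    intro α
    apply MvPolynomial.funext
    intro x
    rw [eval_rename, hevalT, hevalT]
    have h1 : (∏ i : Fin (m+1), ∏ j ∈ Finset.Ioi i,
          ((x ∘ ⇑(Equiv.swap 0 α)) i - (x ∘ ⇑(Equiv.swap 0 α)) j)) ^ 2
        = (∏ i : Fin (m+1), ∏ j ∈ Finset.Ioi i, (x i - x j)) ^ 2 :=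
      vand_sq_perm (Equiv.swap 0 α) x
    rw [h1]
    congr 1
    conv_rhs => rw [← hS (Equiv.swap 0 α), eval_rename]
  have hone : ∀ E : Finset (Fin (m+1)), E.card = 1 → phiW (W E) T = phiW (W {0}) T := by
    intro E hE
    obtain ⟨α, rfl⟩ := Finset.card_eq_one.mp hE
    rw [← hTsym α, phiW_rename]
    congr 1
    funext b k
    have hiff : Equiv.swap 0 α b = α ↔ b = 0 := by
      conv_lhs => rw [show α = Equiv.swap 0 α 0 from (Equiv.swap_apply_left 0 α).symm]
      exact (Equiv.swap 0 α).injective.eq_iff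
    simp only [hW, Finset.mem_singleton, hiff]
    exact (hTsym α).symm
  have hWcons : W {0} = Fin.cons (fun k => z ^ k) (fun _ => Bf) := by
    funext a
    refine Fin.cases ?_ (fun j => ?_) a
    · funext k; simp [hW]
    · funext k; simp [hW, Fin.succ_ne_zero]
  -- assemble
  rw [claim0, ← Finset.add_sum_erase _ _ (Finset.mem_powerset.mpr (Finset.empty_subset _))]
  rw [show (R z) ^ (∅ : Finset (Fin (m+1))).card * phiW (W ∅) T = phiW (fun _ => Bf) T by
    rw [hWempty]; simp]
  rw [add_sub_cancel_left]
  have hstep : ∑ E ∈ (Finset.univ.powerset.erase (∅ : Finset (Fin (m+1)))),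
        (R z) ^ E.card * phiW (W E) T
      = ∑ E ∈ (Finset.univ.powerset.erase (∅ : Finset (Fin (m+1)))),
          (if E.card = 1 then R z * phiW (W {0}) T else 0) := by
    refine Finset.sum_congr rfl fun E hE => ?_
    by_cases h1 : E.card = 1
    · rw [if_pos h1, h1, pow_one, hone E h1]
    · have hmem := Finset.mem_erase.mp hE
      have hpos : 0 < E.card :=
        Finset.card_pos.mpr (Finset.nonempty_iff_ne_empty.mpr hmem.1)
      have h2 : 2 ≤ E.card := by omega
      rw [hzero2 E h2, mul_zero, if_neg h1]
  rw [hstep, ← Finset.sum_filter, Finset.sum_const]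
  have hfil : ((Finset.univ.powerset.erase (∅ : Finset (Fin (m+1)))).filter
        (fun E : Finset (Fin (m+1)) => E.card = 1)) = Finset.univ.powersetCard 1 := by
    ext E
    simp only [Finset.mem_filter, Finset.mem_erase, Finset.mem_powerset,
      Finset.mem_powersetCard]
    constructor
    · rintro ⟨⟨_, hsub⟩, hcard⟩; exact ⟨hsub, hcard⟩
    · rintro ⟨hsub, hcard⟩
      refine ⟨⟨?_, hsub⟩, hcard⟩
      intro h; rw [h] at hcard; simp at hcard
  rw [hfil, Finset.card_powersetCard, Finset.card_univ, Fintype.card_fin,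
    Nat.choose_one_right, nsmul_eq_mul, hWcons]
  push_cast
  ring

end Main
end

section
/- (Particle–hole duality for multiple contour integrals) Let L = {x_1,...,x_{k+ℓ}} be a finite set of distinct reals, Q_L(z) = ∏_{x∈L}(z-x), φ a rational function with no zeros or poles on L, and S a symmetric polynomial in k variables with complementary symmetric polynomial S̃ in ℓ variables (obtained by rewriting power sums ∑ u_i^α of k arguments as t_α(L) minus power sums of the ℓ complementary arguments). Then (∏_{α=1}^{k} ∮_{Γ(L)} du_α φ(u_α)/(2πi Q_L(u_α))) (S·Δ_k²)(u) = (k!/ℓ!) · Δ(L)² · (∏_{x∈L} φ(x)/Q_L'(x)) · (∏_{α=1}^{ℓ} ∮_{Γ(L)} du_α/(2πi φ(u_α) Q_L(u_α))) (S̃·Δ_ℓ²)(u), where Γ(L) encircles exactly the points of L and Δ(L) is the Vandermonde of all points of L. -/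
open scoped Classical
open Finset

namespace Stmt17

variable {N k : ℕ}

noncomputable def D2 (x : Fin N → ℝ) (s : Finset (Fin N)) : ℝ :=
  ∏ i ∈ s, ∏ j ∈ s.filter (fun j => i < j), (x i - x j) ^ 2

lemma vand_sq (x : Fin N → ℝ) (σ : Fin k → Fin N) (hσ : StrictMono σ) :
    (∏ i : Fin k, ∏ j ∈ Finset.Ioi i, (x (σ i) - x (σ j))) ^ 2
      = D2 x (Finset.image σ Finset.univ) := by
  have hinj : Function.Injective σ := hσ.injective
  rw [D2, prod_image (fun a _ b _ h => hinj h)]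
  rw [← prod_pow]
  refine prod_congr rfl fun a _ => ?_
  have hset : (Finset.image σ Finset.univ).filter (fun j => σ a < j)
      = Finset.image σ (Finset.Ioi a) := by
    ext j
    simp only [mem_filter, mem_image, mem_univ, true_and, mem_Ioi]
    constructor
    · rintro ⟨⟨b, rfl⟩, hb⟩; exact ⟨b, hσ.lt_iff_lt.mp hb, rfl⟩
    · rintro ⟨b, hb, rfl⟩; exact ⟨⟨b, rfl⟩, hσ hb⟩
  rw [hset, prod_image (fun a _ b _ h => hinj h), ← prod_pow]

end Stmt17

namespace Stmt17

variable {N : ℕ}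

lemma sqc (a b : ℝ) : (a - b) ^ 2 = (b - a) ^ 2 := by ring

lemma erase_sq (x : Fin N → ℝ) (t : Finset (Fin N)) :
    ∏ j ∈ t, ∏ i ∈ t.erase j, (x j - x i) ^ 2 = (D2 x t) ^ 2 := by
  have hsplit : ∀ j, t.erase j
      = (t.filter (fun i => i < j)) ∪ (t.filter (fun i => j < i)) := by
    intro j; ext i
    simp only [mem_erase, mem_union, mem_filter]
    constructor
    · rintro ⟨hne, hi⟩
      rcases lt_or_gt_of_ne hne with h | h
      · exact Or.inl ⟨hi, h⟩
      · exact Or.inr ⟨hi, h⟩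
    · rintro (⟨hi, h⟩ | ⟨hi, h⟩) <;> exact ⟨by omega, hi⟩
  have hdisj : ∀ j : Fin N, Disjoint (t.filter (fun i => i < j)) (t.filter (fun i => j < i)) := by
    intro j
    rw [Finset.disjoint_left]
    intro a ha hb
    simp only [mem_filter] at ha hb
    exact absurd (lt_trans ha.2 hb.2) (lt_irrefl _)
  calc ∏ j ∈ t, ∏ i ∈ t.erase j, (x j - x i) ^ 2
      = ∏ j ∈ t, ((∏ i ∈ t.filter (fun i => i < j), (x j - x i) ^ 2) *
          ∏ i ∈ t.filter (fun i => j < i), (x j - x i) ^ 2) := by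
        refine prod_congr rfl fun j _ => ?_
        rw [hsplit j, prod_union (hdisj j)]
    _ = (∏ j ∈ t, ∏ i ∈ t.filter (fun i => i < j), (x j - x i) ^ 2) *
          ∏ j ∈ t, ∏ i ∈ t.filter (fun i => j < i), (x j - x i) ^ 2 := prod_mul_distrib
    _ = (D2 x t) * (D2 x t) := by
        congr 1
        rw [Finset.prod_comm' (t' := t) (s' := fun i => t.filter (fun j => i < j))
          (by intro a b; simp only [mem_filter]; tauto)]
        refine prod_congr rfl fun i _ => prod_congr rfl fun j _ => sqc _ _
    _ = (D2 x t) ^ 2 := (sq _).symm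

lemma D2_split (x : Fin N → ℝ) (s : Finset (Fin N)) :
    D2 x Finset.univ = D2 x s * D2 x sᶜ * ∏ i ∈ s, ∏ j ∈ sᶜ, (x i - x j) ^ 2 := by
  have hfil : ∀ (p : Fin N → Prop),
      Finset.univ.filter p = (s.filter p) ∪ (sᶜ.filter p) := by
    intro p; ext i
    simp only [mem_filter, mem_union, mem_univ, true_and, mem_compl]
    tauto
  have hinner : ∀ (t : Finset (Fin N)), ∀ i,
      (∏ j ∈ Finset.univ.filter (fun j => i < j), (x i - x j) ^ 2)
        = (∏ j ∈ t.filter (fun j => i < j), (x i - x j) ^ 2) *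
          ∏ j ∈ tᶜ.filter (fun j => i < j), (x i - x j) ^ 2 := by
    intro t i
    rw [show Finset.univ.filter (fun j => i < j)
        = (t.filter (fun j => i < j)) ∪ (tᶜ.filter (fun j => i < j)) by
          ext j; simp only [mem_filter, mem_union, mem_univ, true_and, mem_compl]; tauto]
    refine prod_union ?_
    rw [Finset.disjoint_left]
    intro a ha hb
    simp only [mem_filter, mem_compl] at ha hb
    exact hb.1 ha.1
  have huniv : D2 x Finset.univ
      = (∏ i ∈ s, (∏ j ∈ s.filter (fun j => i < j), (x i - x j) ^ 2) *
          ∏ j ∈ sᶜ.filter (fun j => i < j), (x i - x j) ^ 2) *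
        ∏ i ∈ sᶜ, (∏ j ∈ s.filter (fun j => i < j), (x i - x j) ^ 2) *
          ∏ j ∈ sᶜ.filter (fun j => i < j), (x i - x j) ^ 2 := by
    rw [D2, ← Finset.prod_mul_prod_compl s]
    congr 1 <;> exact prod_congr rfl fun i _ => hinner s i
  rw [huniv, prod_mul_distrib, prod_mul_distrib]
  have h1 : (∏ i ∈ s, ∏ j ∈ s.filter (fun j => i < j), (x i - x j) ^ 2) = D2 x s := rfl
  have h2 : (∏ i ∈ sᶜ, ∏ j ∈ sᶜ.filter (fun j => i < j), (x i - x j) ^ 2) = D2 x sᶜ := rfl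
  have h3 : (∏ i ∈ sᶜ, ∏ j ∈ s.filter (fun j => i < j), (x i - x j) ^ 2)
      = ∏ i ∈ s, ∏ j ∈ sᶜ.filter (fun j => j < i), (x i - x j) ^ 2 := by
    rw [Finset.prod_comm' (t' := s) (s' := fun j => sᶜ.filter (fun i => i < j))
      (by intro a b; simp only [mem_filter]; tauto)]
    exact prod_congr rfl fun i _ => prod_congr rfl fun j _ => sqc _ _
  have h4 : ∀ i ∈ s, (∏ j ∈ sᶜ.filter (fun j => i < j), (x i - x j) ^ 2) *
      ∏ j ∈ sᶜ.filter (fun j => j < i), (x i - x j) ^ 2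
      = ∏ j ∈ sᶜ, (x i - x j) ^ 2 := by
    intro i hi
    rw [← prod_union]
    · congr 1
      ext j
      simp only [mem_union, mem_filter, mem_compl]
      constructor
      · rintro (⟨h, _⟩ | ⟨h, _⟩) <;> exact h
      · intro hj
        have : j ≠ i := fun h => (h ▸ hj) hi
        rcases lt_or_gt_of_ne this with h | h
        · exact Or.inr ⟨hj, h⟩
        · exact Or.inl ⟨hj, h⟩
    · rw [Finset.disjoint_left]
      intro a ha hb
      simp only [mem_filter] at ha hb
      exact absurd (lt_trans ha.2 hb.2) (lt_irrefl _)
  rw [h1, h2, h3]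
  have h5 : (∏ i ∈ s, ∏ j ∈ sᶜ.filter (fun j => i < j), (x i - x j) ^ 2) *
      ∏ i ∈ s, ∏ j ∈ sᶜ.filter (fun j => j < i), (x i - x j) ^ 2
      = ∏ i ∈ s, ∏ j ∈ sᶜ, (x i - x j) ^ 2 := by
    rw [← prod_mul_distrib]
    exact prod_congr rfl h4
  rw [← h5]
  ring

end Stmt17

namespace Stmt17

variable {N : ℕ}

lemma QQ_sq (x : Fin N → ℝ) (s : Finset (Fin N)) :
    ∏ j ∈ sᶜ, (∏ i ∈ Finset.univ.erase j, (x j - x i)) ^ 2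
      = (D2 x sᶜ) ^ 2 * ∏ i ∈ s, ∏ j ∈ sᶜ, (x i - x j) ^ 2 := by
  have hsplit : ∀ j ∈ sᶜ, (Finset.univ.erase j : Finset (Fin N)) = s ∪ (sᶜ.erase j) := by
    intro j hj
    ext i
    simp only [mem_erase, mem_union, mem_compl, mem_univ, and_true]
    constructor
    · intro hne
      by_cases hi : i ∈ s
      · exact Or.inl hi
      · exact Or.inr ⟨hne, by simpa using hi⟩
    · rintro (hi | ⟨hne, _⟩)
      · rintro rfl; exact (mem_compl.mp hj) hi
      · exact hne
  calc ∏ j ∈ sᶜ, (∏ i ∈ Finset.univ.erase j, (x j - x i)) ^ 2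
      = ∏ j ∈ sᶜ, ∏ i ∈ Finset.univ.erase j, (x j - x i) ^ 2 := by
        exact prod_congr rfl fun j _ => (prod_pow _ _ _).symm
    _ = ∏ j ∈ sᶜ, ((∏ i ∈ s, (x j - x i) ^ 2) * ∏ i ∈ sᶜ.erase j, (x j - x i) ^ 2) := by
        refine prod_congr rfl fun j hj => ?_
        rw [hsplit j hj]
        refine prod_union ?_
        rw [Finset.disjoint_left]
        intro a ha hb
        simp only [mem_erase, mem_compl] at hb
        exact hb.2 ha
    _ = (∏ j ∈ sᶜ, ∏ i ∈ s, (x j - x i) ^ 2) * ∏ j ∈ sᶜ, ∏ i ∈ sᶜ.erase j, (x j - x i) ^ 2 :=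
        prod_mul_distrib
    _ = (D2 x sᶜ) ^ 2 * ∏ i ∈ s, ∏ j ∈ sᶜ, (x i - x j) ^ 2 := by
        rw [erase_sq x sᶜ, Finset.prod_comm]
        rw [mul_comm]
        congr 1
        exact prod_congr rfl fun i _ => prod_congr rfl fun j _ => sqc _ _

/-- Key product identity. -/
lemma key_identity (x : Fin N → ℝ) (s : Finset (Fin N)) :
    D2 x Finset.univ * D2 x sᶜ
      = D2 x s * ∏ j ∈ sᶜ, (∏ i ∈ Finset.univ.erase j, (x j - x i)) ^ 2 := by
  rw [QQ_sq, D2_split x s]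
  ring

end Stmt17

namespace Stmt17

lemma eval_Q' {N : ℕ} (x : Fin N → ℝ) (j : Fin N) :
    (Polynomial.derivative (∏ i, (Polynomial.X - Polynomial.C (x i)))).eval (x j)
      = ∏ i ∈ Finset.univ.erase j, (x j - x i) := by
  have hn : (∏ i, (Polynomial.X - Polynomial.C (x i)))
      = Lagrange.nodal Finset.univ x := rfl
  rw [hn, Lagrange.eval_nodal_derivative_eval_node_eq (mem_univ j), Lagrange.eval_nodal]

lemma image_orderEmbOfFin {N k : ℕ} (s : Finset (Fin N)) (h : s.card = k) :
    Finset.image (s.orderEmbOfFin h) Finset.univ = s := by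
  apply Finset.coe_injective
  rw [coe_image, coe_univ, Set.image_univ]
  exact Finset.range_orderEmbOfFin s h

noncomputable def cm (k l : ℕ) (σ : Fin k → Fin (k + l)) : Fin l → Fin (k + l) :=
  if h : ((Finset.image σ Finset.univ)ᶜ : Finset (Fin (k + l))).card = l then
    ⇑((Finset.image σ Finset.univ)ᶜ.orderEmbOfFin h)
  else fun b => Fin.cast (Nat.add_comm l k) (Fin.castAdd k b)

noncomputable def cm' (k l : ℕ) (τ : Fin l → Fin (k + l)) : Fin k → Fin (k + l) :=
  if h : ((Finset.image τ Finset.univ)ᶜ : Finset (Fin (k + l))).card = k then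
    ⇑((Finset.image τ Finset.univ)ᶜ.orderEmbOfFin h)
  else fun a => Fin.castAdd l a

lemma card_compl_image {k l : ℕ} (σ : Fin k → Fin (k + l)) (hσ : Function.Injective σ) :
    ((Finset.image σ Finset.univ)ᶜ : Finset (Fin (k + l))).card = l := by
  rw [Finset.card_compl, Finset.card_image_of_injective _ hσ, card_univ]
  simp

lemma cm_eq {k l : ℕ} (σ : Fin k → Fin (k + l)) (hσ : Function.Injective σ) :
    cm k l σ = ⇑((Finset.image σ Finset.univ)ᶜ.orderEmbOfFin (card_compl_image σ hσ)) := by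
  rw [cm, dif_pos (card_compl_image σ hσ)]

lemma cm_strictMono {k l : ℕ} (σ : Fin k → Fin (k + l)) (hσ : Function.Injective σ) :
    StrictMono (cm k l σ) := by
  rw [cm_eq σ hσ]
  exact ((Finset.image σ Finset.univ)ᶜ.orderEmbOfFin _).strictMono

lemma image_cm {k l : ℕ} (σ : Fin k → Fin (k + l)) (hσ : Function.Injective σ) :
    Finset.image (cm k l σ) Finset.univ = (Finset.image σ Finset.univ)ᶜ := by
  rw [cm_eq σ hσ]
  exact image_orderEmbOfFin _ _

lemma card_compl_image' {k l : ℕ} (τ : Fin l → Fin (k + l)) (hτ : Function.Injective τ) :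
    ((Finset.image τ Finset.univ)ᶜ : Finset (Fin (k + l))).card = k := by
  rw [Finset.card_compl, Finset.card_image_of_injective _ hτ, card_univ]
  simp

lemma cm'_eq {k l : ℕ} (τ : Fin l → Fin (k + l)) (hτ : Function.Injective τ) :
    cm' k l τ = ⇑((Finset.image τ Finset.univ)ᶜ.orderEmbOfFin (card_compl_image' τ hτ)) := by
  rw [cm', dif_pos (card_compl_image' τ hτ)]

lemma cm'_strictMono {k l : ℕ} (τ : Fin l → Fin (k + l)) (hτ : Function.Injective τ) :
    StrictMono (cm' k l τ) := by
  rw [cm'_eq τ hτ]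
  exact ((Finset.image τ Finset.univ)ᶜ.orderEmbOfFin _).strictMono

lemma image_cm' {k l : ℕ} (τ : Fin l → Fin (k + l)) (hτ : Function.Injective τ) :
    Finset.image (cm' k l τ) Finset.univ = (Finset.image τ Finset.univ)ᶜ := by
  rw [cm'_eq τ hτ]
  exact image_orderEmbOfFin _ _

lemma cm'_cm {k l : ℕ} (σ : Fin k → Fin (k + l)) (hσ : StrictMono σ) :
    cm' k l (cm k l σ) = σ := by
  have h1 : Finset.image (cm k l σ) Finset.univ = (Finset.image σ Finset.univ)ᶜ :=
    image_cm σ hσ.injective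
  have hinj : Function.Injective (cm k l σ) := (cm_strictMono σ hσ.injective).injective
  rw [cm'_eq _ hinj]
  have h2 : ((Finset.image (cm k l σ) Finset.univ)ᶜ : Finset (Fin (k + l)))
      = Finset.image σ Finset.univ := by rw [h1, compl_compl]
  have := Finset.orderEmbOfFin_unique
    (f := σ) (s := ((Finset.image (cm k l σ) Finset.univ)ᶜ : Finset (Fin (k + l))))
    (by rw [h2, Finset.card_image_of_injective _ hσ.injective, card_univ]; simp)
    (fun a => by rw [h2]; exact Finset.mem_image_of_mem _ (mem_univ a)) hσ
  exact this.symm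

lemma cm_cm' {k l : ℕ} (τ : Fin l → Fin (k + l)) (hτ : StrictMono τ) :
    cm k l (cm' k l τ) = τ := by
  have h1 : Finset.image (cm' k l τ) Finset.univ = (Finset.image τ Finset.univ)ᶜ :=
    image_cm' τ hτ.injective
  have hinj : Function.Injective (cm' k l τ) := (cm'_strictMono τ hτ.injective).injective
  rw [cm_eq _ hinj]
  have h2 : ((Finset.image (cm' k l τ) Finset.univ)ᶜ : Finset (Fin (k + l)))
      = Finset.image τ Finset.univ := by rw [h1, compl_compl]
  have := Finset.orderEmbOfFin_unique
    (f := τ) (s := ((Finset.image (cm' k l τ) Finset.univ)ᶜ : Finset (Fin (k + l))))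
    (by rw [h2, Finset.card_image_of_injective _ hτ.injective, card_univ]; simp)
    (fun a => by rw [h2]; exact Finset.mem_image_of_mem _ (mem_univ a)) hτ
  exact this.symm

end Stmt17

namespace Stmt17

lemma term_eq {k l : ℕ} (x : Fin (k + l) → ℝ) (hdist : Function.Injective x)
    (φ : ℝ → ℝ) (hφ : ∀ i, φ (x i) ≠ 0) (Q' : ℝ → ℝ)
    (hq : ∀ i, Q' (x i) = ∏ i' ∈ Finset.univ.erase i, (x i - x i'))
    (σ : Fin k → Fin (k + l)) (hσ : StrictMono σ) :
    D2 x (Finset.image σ Finset.univ) * ∏ a : Fin k, φ (x (σ a)) / Q' (x (σ a))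
      = D2 x Finset.univ * (∏ i, φ (x i) / Q' (x i)) *
        (D2 x (Finset.image σ Finset.univ)ᶜ *
          ∏ j ∈ (Finset.image σ Finset.univ)ᶜ, 1 / (φ (x j) * Q' (x j))) := by
  have qne : ∀ i, Q' (x i) ≠ 0 := by
    intro i
    rw [hq]
    refine prod_ne_zero_iff.mpr fun i' hi' => ?_
    have : i' ≠ i := (mem_erase.mp hi').1
    exact sub_ne_zero_of_ne fun h => this (hdist h.symm)
  set s := Finset.image σ Finset.univ with hs
  have key := key_identity x s
  have hqq : ∏ j ∈ sᶜ, (∏ i ∈ Finset.univ.erase j, (x j - x i)) ^ 2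
      = (∏ j ∈ sᶜ, Q' (x j)) ^ 2 := by
    rw [← prod_pow]
    exact prod_congr rfl fun j _ => by rw [hq j]
  rw [hqq] at key
  have h1 : (∏ a : Fin k, φ (x (σ a)) / Q' (x (σ a)))
      = ∏ i ∈ s, φ (x i) / Q' (x i) :=
    (Finset.prod_image (f := fun i => φ (x i) / Q' (x i))
      (fun a _ b _ h => hσ.injective h)).symm
  have h2 : (∏ i, φ (x i) / Q' (x i))
      = (∏ i ∈ s, φ (x i) / Q' (x i)) * ∏ i ∈ sᶜ, φ (x i) / Q' (x i) :=
    (Finset.prod_mul_prod_compl s _).symm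
  rw [h1, h2, prod_div_distrib, prod_div_distrib]
  have h3 : (∏ j ∈ sᶜ, (1 : ℝ) / (φ (x j) * Q' (x j)))
      = 1 / ((∏ j ∈ sᶜ, φ (x j)) * ∏ j ∈ sᶜ, Q' (x j)) := by
    rw [← prod_mul_distrib]
    rw [one_div, ← prod_inv_distrib]
    exact prod_congr rfl fun j _ => (one_div _)
  rw [h3]
  set P1 := ∏ i ∈ s, φ (x i)
  set Q1 := ∏ i ∈ s, Q' (x i)
  set P2 := ∏ j ∈ sᶜ, φ (x j)
  set Q2 := ∏ j ∈ sᶜ, Q' (x j)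
  have hP1 : P1 ≠ 0 := prod_ne_zero_iff.mpr fun i _ => hφ i
  have hQ1 : Q1 ≠ 0 := prod_ne_zero_iff.mpr fun i _ => qne i
  have hP2 : P2 ≠ 0 := prod_ne_zero_iff.mpr fun i _ => hφ i
  have hQ2 : Q2 ≠ 0 := prod_ne_zero_iff.mpr fun i _ => qne i
  field_simp
  linear_combination (-1 : ℝ) * key

end Stmt17


/-- particle–hole duality, formula (8.9): let `L = {x_1,...,x_{k+ℓ}}` be
distinct reals, `Q_L(z) = ∏_{x∈L}(z-x)`, `φ` a function with no zeros (or poles) on `L`,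
`S` a symmetric polynomial in `k` variables and `S̃` its complementary symmetric polynomial
in `ℓ` variables (characterized by: whenever the power sums of `u` and `v` add up to the
power sums of `L`, then `S(u) = S̃(v)`).  Interpreting each `k`-fold contour integral over
`Γ(L)` as `k!` times the sum over `k`-element subsets of `L` (enumerated by strictly
increasing index tuples), one has
`(∏_{α=1}^k ∮_{Γ(L)} φ/Q_L)(S·Δ_k²)
 = (k!/ℓ!)·Δ(L)²·(∏_{x∈L} φ(x)/Q_L'(x))·(∏_{α=1}^ℓ ∮_{Γ(L)} 1/(φ·Q_L))(S̃·Δ_ℓ²)`. -/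
theorem stmt_17 (k l : ℕ) (xL : Fin (k + l) → ℝ) (hdist : Function.Injective xL)
    (φ : ℝ → ℝ) (hφ : ∀ i, φ (xL i) ≠ 0)
    (S : MvPolynomial (Fin k) ℝ) (hS : S.IsSymmetric)
    (St : MvPolynomial (Fin l) ℝ) (hSt : St.IsSymmetric)
    (hcompl : ∀ (u : Fin k → ℝ) (v : Fin l → ℝ),
      (∀ a : ℕ, 1 ≤ a → (∑ i, u i ^ a) + ∑ j, v j ^ a = ∑ i, xL i ^ a) →
      MvPolynomial.eval u S = MvPolynomial.eval v St)
    (Q' : ℝ → ℝ)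
    (hQ' : ∀ t, Q' t =
      (Polynomial.derivative (∏ i, (Polynomial.X - Polynomial.C (xL i)))).eval t) :
    (Nat.factorial k : ℝ) *
        ∑ σ ∈ Finset.univ.filter (fun σ : Fin k → Fin (k + l) => StrictMono σ),
          (MvPolynomial.eval (fun a => xL (σ a)) S *
              (∏ i : Fin k, ∏ j ∈ Finset.Ioi i, (xL (σ i) - xL (σ j))) ^ 2) *
            ∏ a : Fin k, φ (xL (σ a)) / Q' (xL (σ a))
      = ((Nat.factorial k : ℝ) / (Nat.factorial l : ℝ)) *
          (∏ i : Fin (k + l), ∏ j ∈ Finset.Ioi i, (xL i - xL j)) ^ 2 *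
          (∏ i : Fin (k + l), φ (xL i) / Q' (xL i)) *
          ((Nat.factorial l : ℝ) *
            ∑ τ ∈ Finset.univ.filter (fun τ : Fin l → Fin (k + l) => StrictMono τ),
              (MvPolynomial.eval (fun a => xL (τ a)) St *
                  (∏ i : Fin l, ∏ j ∈ Finset.Ioi i, (xL (τ i) - xL (τ j))) ^ 2) *
                ∏ a : Fin l, 1 / (φ (xL (τ a)) * Q' (xL (τ a)))) := by
  classical
  have hq : ∀ i : Fin (k + l),
      Q' (xL i) = ∏ i' ∈ Finset.univ.erase i, (xL i - xL i') := fun i => by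
    rw [hQ' (xL i), Stmt17.eval_Q']
  have hl : (Nat.factorial l : ℝ) ≠ 0 := Nat.cast_ne_zero.mpr (Nat.factorial_ne_zero l)
  have hA : (∏ i : Fin (k + l), ∏ j ∈ Finset.Ioi i, (xL i - xL j)) ^ 2
      = Stmt17.D2 xL Finset.univ := by
    simpa using Stmt17.vand_sq xL id strictMono_id
  have core :
      ∑ σ ∈ Finset.univ.filter (fun σ : Fin k → Fin (k + l) => StrictMono σ),
          (MvPolynomial.eval (fun a => xL (σ a)) S *
              (∏ i : Fin k, ∏ j ∈ Finset.Ioi i, (xL (σ i) - xL (σ j))) ^ 2) *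
            ∏ a : Fin k, φ (xL (σ a)) / Q' (xL (σ a))
        = ∑ τ ∈ Finset.univ.filter (fun τ : Fin l → Fin (k + l) => StrictMono τ),
            (∏ i : Fin (k + l), ∏ j ∈ Finset.Ioi i, (xL i - xL j)) ^ 2 *
            (∏ i : Fin (k + l), φ (xL i) / Q' (xL i)) *
            ((MvPolynomial.eval (fun a => xL (τ a)) St *
                (∏ i : Fin l, ∏ j ∈ Finset.Ioi i, (xL (τ i) - xL (τ j))) ^ 2) *
              ∏ a : Fin l, 1 / (φ (xL (τ a)) * Q' (xL (τ a)))) := by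
    refine Finset.sum_nbij' (Stmt17.cm k l) (Stmt17.cm' k l) ?_ ?_ ?_ ?_ ?_
    · intro σ hσ
      rw [Finset.mem_filter] at hσ ⊢
      exact ⟨Finset.mem_univ _, Stmt17.cm_strictMono σ hσ.2.injective⟩
    · intro τ hτ
      rw [Finset.mem_filter] at hτ ⊢
      exact ⟨Finset.mem_univ _, Stmt17.cm'_strictMono τ hτ.2.injective⟩
    · intro σ hσ
      rw [Finset.mem_filter] at hσ
      exact Stmt17.cm'_cm σ hσ.2
    · intro τ hτ
      rw [Finset.mem_filter] at hτ
      exact Stmt17.cm_cm' τ hτ.2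
    · intro σ hσmem
      rw [Finset.mem_filter] at hσmem
      have hσ : StrictMono σ := hσmem.2
      set τ := Stmt17.cm k l σ with hτdef
      have hτ : StrictMono τ := Stmt17.cm_strictMono σ hσ.injective
      set s := Finset.image σ Finset.univ with hs
      have himgτ : Finset.image τ Finset.univ = sᶜ := Stmt17.image_cm σ hσ.injective
      -- equality of the symmetric-polynomial evaluations
      have hSeq : MvPolynomial.eval (fun a => xL (σ a)) S
          = MvPolynomial.eval (fun a => xL (τ a)) St := by
        refine hcompl _ _ fun a _ => ?_
        have h1 : (∑ i : Fin k, xL (σ i) ^ a) = ∑ i ∈ s, xL i ^ a :=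
          (Finset.sum_image (f := fun i => xL i ^ a)
            (fun a _ b _ h => hσ.injective h)).symm
        have h2 : (∑ j : Fin l, xL (τ j) ^ a) = ∑ j ∈ sᶜ, xL j ^ a := by
          rw [← himgτ]
          exact (Finset.sum_image (f := fun i => xL i ^ a)
            (fun a _ b _ h => hτ.injective h)).symm
        rw [h1, h2, Finset.sum_add_sum_compl]
      have hΔσ : (∏ i : Fin k, ∏ j ∈ Finset.Ioi i, (xL (σ i) - xL (σ j))) ^ 2
          = Stmt17.D2 xL s := Stmt17.vand_sq xL σ hσ
      have hΔτ : (∏ i : Fin l, ∏ j ∈ Finset.Ioi i, (xL (τ i) - xL (τ j))) ^ 2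
          = Stmt17.D2 xL sᶜ := by
        rw [Stmt17.vand_sq xL τ hτ, himgτ]
      have hPτ : (∏ a : Fin l, 1 / (φ (xL (τ a)) * Q' (xL (τ a))))
          = ∏ j ∈ sᶜ, 1 / (φ (xL j) * Q' (xL j)) := by
        rw [← himgτ]
        exact (Finset.prod_image (f := fun j => 1 / (φ (xL j) * Q' (xL j)))
          (fun a _ b _ h => hτ.injective h)).symm
      have hterm := Stmt17.term_eq xL hdist φ hφ Q' hq σ hσ
      rw [hSeq, hΔσ, hΔτ, hPτ, hA]
      rw [← hs] at hterm
      linear_combination (MvPolynomial.eval (fun a => xL (τ a)) St) * hterm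
  rw [core, ← Finset.mul_sum]
  have hfact : ∀ A B T : ℝ,
      (Nat.factorial k : ℝ) * (A * B * T)
        = ((Nat.factorial k : ℝ) / (Nat.factorial l : ℝ)) * A * B *
          ((Nat.factorial l : ℝ) * T) := by
    intro A B T
    field_simp
  exact hfact _ _ _
end
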